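/- arXiv:math/0303296 — 3 statements merged into one kernel-verified Lean document; each statement's English description precedes it below -/
import Mathlib

section
/- Let $T\colon X \to X$ be an ergodic measure-preserving automorphism of a probability space $(X,\nu)$ and let $\phi\colon X \to \mathbb{R}$ be integrable with $\int \phi\, d\nu = 0$. Define $S(n,x) = \sum_{i=0}^{n-1} \phi(T^i(x))$. Then for every $\varepsilon > 0$, the set of points $x$ such that $|S(n,x)| < \varepsilon$ for infinitely many $n$ has full $\nu$-measure. -/
open MeasureTheory Filter Finset
open scoped Classical

section Atkinson

variable {X : Type*} [MeasurableSpace X] {ν : Measure X} [IsProbabilityMeasure ν]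
  {τ : X → X} {φ : X → ℝ}

/-- Birkhoff sums. -/
noncomputable def birk (φ : X → ℝ) (τ : X → X) (n : ℕ) (x : X) : ℝ :=
  ∑ i ∈ Finset.range n, φ (τ^[i] x)

lemma birk_zero (x : X) : birk φ τ 0 x = 0 := by simp [birk]

lemma birk_succ' (n : ℕ) (x : X) :
    birk φ τ (n + 1) x = φ x + birk φ τ n (τ x) := by
  rw [birk, Finset.sum_range_succ']
  simp [birk, Function.iterate_succ_apply, add_comm]

lemma birk_sub {n m : ℕ} (h : n ≤ m) (x : X) :
    birk φ τ m x - birk φ τ n x = birk φ τ (m - n) (τ^[n] x) := by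
  have : birk φ τ m x = birk φ τ n x + birk φ τ (m - n) (τ^[n] x) := by
    rw [birk, ← Finset.sum_range_add_sum_Ico _ h]
    congr 1
    rw [birk, Finset.sum_Ico_eq_sum_range]
    refine Finset.sum_congr rfl fun i _ => ?_
    rw [← Function.iterate_add_apply, add_comm n i]
  linarith

lemma birk_neg (n : ℕ) (x : X) : birk (fun y => -φ y) τ n x = - birk φ τ n x := by
  simp [birk]

lemma birk_sub_const (c : ℝ) (n : ℕ) (x : X) :
    birk (fun y => φ y - c) τ n x = birk φ τ n x - c * n := by
  simp [birk, Finset.sum_sub_distrib, mul_comm]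

lemma measurable_birk (hφ : Measurable φ) (hτ : Measurable τ) (n : ℕ) :
    Measurable (birk φ τ n) :=
  Finset.measurable_sum _ fun i _ => hφ.comp (hτ.iterate i)

lemma integrable_birk (hτ : MeasurePreserving τ ν ν) (hφ : Integrable φ ν) (n : ℕ) :
    Integrable (birk φ τ n) ν := by
  refine integrable_finset_sum _ fun i _ => ?_
  exact (hτ.iterate i).integrable_comp hφ.aestronglyMeasurable |>.mpr hφ

/-- Running maximum of Birkhoff sums over `0 ≤ n ≤ N`. -/
noncomputable def maxS (φ : X → ℝ) (τ : X → X) (N : ℕ) (x : X) : ℝ :=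
  (Finset.range (N + 1)).sup' Finset.nonempty_range_add_one (fun n => birk φ τ n x)

lemma maxS_nonneg (N : ℕ) (x : X) : 0 ≤ maxS φ τ N x := by
  have h0 : (0:ℕ) ∈ Finset.range (N + 1) := Finset.mem_range.mpr (Nat.succ_pos N)
  calc (0:ℝ) = birk φ τ 0 x := (birk_zero x).symm
    _ ≤ maxS φ τ N x := Finset.le_sup' (f := fun n => birk φ τ n x) h0

lemma le_maxS {n N : ℕ} (h : n ≤ N) (x : X) : birk φ τ n x ≤ maxS φ τ N x :=
  Finset.le_sup' (f := fun n => birk φ τ n x) (Finset.mem_range.mpr (Nat.lt_succ_of_le h))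

lemma maxS_le {N : ℕ} {x : X} {a : ℝ} (h : ∀ n ≤ N, birk φ τ n x ≤ a) :
    maxS φ τ N x ≤ a :=
  Finset.sup'_le _ _ fun n hn => h n (Nat.lt_succ_iff.mp (Finset.mem_range.mp hn))

lemma maxS_succ (N : ℕ) (x : X) :
    maxS φ τ (N + 1) x = max (birk φ τ (N + 1) x) (maxS φ τ N x) := by
  apply le_antisymm
  · refine maxS_le fun n hn => ?_
    rcases Nat.lt_succ_iff_lt_or_eq.mp (Nat.lt_succ_of_le hn) with h' | rfl
    · exact le_max_of_le_right (le_maxS (Nat.lt_succ_iff.mp h') x)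
    · exact le_max_left _ _
  · exact max_le (le_maxS le_rfl x) (maxS_le fun n hn => le_maxS (hn.trans (Nat.le_succ N)) x)

lemma maxS_zero (x : X) : maxS φ τ 0 x = 0 := by
  simp [maxS, birk_zero]

lemma maxS_mono {N M : ℕ} (h : N ≤ M) (x : X) : maxS φ τ N x ≤ maxS φ τ M x :=
  maxS_le fun n hn => le_maxS (hn.trans h) x

lemma measurable_maxS (hφ : Measurable φ) (hτ : Measurable τ) (N : ℕ) :
    Measurable (maxS φ τ N) := by
  induction N with
  | zero => simpa [funext (maxS_zero (φ := φ) (τ := τ))] using measurable_const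
  | succ N ih =>
    have : maxS φ τ (N + 1) = fun x => max (birk φ τ (N + 1) x) (maxS φ τ N x) :=
      funext (maxS_succ N)
    rw [this]
    exact (measurable_birk hφ hτ _).max ih

lemma integrable_maxS (hτ : MeasurePreserving τ ν ν) (hφ : Integrable φ ν) (N : ℕ) :
    Integrable (maxS φ τ N) ν := by
  induction N with
  | zero =>
    have : maxS φ τ 0 = fun _ => (0:ℝ) := funext (maxS_zero (φ := φ) (τ := τ))
    rw [this]; exact integrable_const 0
  | succ N ih =>
    have : maxS φ τ (N + 1) = fun x => max (birk φ τ (N + 1) x) (maxS φ τ N x) :=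
      funext (maxS_succ N)
    rw [this]
    exact (integrable_birk hτ hφ (N + 1)).sup ih

/-- **Hopf's maximal ergodic theorem** (Garsia's proof). -/
theorem maximal_ergodic (hτ : MeasurePreserving τ ν ν) (hτm : Measurable τ)
    (hφm : Measurable φ) (hφi : Integrable φ ν) (N : ℕ) :
    0 ≤ ∫ x in {x | 0 < maxS φ τ N x}, φ x ∂ν := by
  set D : Set X := {x | 0 < maxS φ τ N x} with hD
  have hDm : MeasurableSet D := measurableSet_lt measurable_const (measurable_maxS hφm hτm N)
  -- pointwise inequality on D
  have key : ∀ x ∈ D, maxS φ τ N x - maxS φ τ N (τ x) ≤ φ x := by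
    intro x hx
    obtain ⟨n, hn, heq⟩ := Finset.exists_mem_eq_sup' (Finset.nonempty_range_add_one)
      (fun n => birk φ τ n x)
    have hnN : n ≤ N := Nat.lt_succ_iff.mp (Finset.mem_range.mp hn)
    have hx' : 0 < maxS φ τ N x := hx
    rcases n with _ | m
    · exfalso
      have h0 : maxS φ τ N x = 0 := by
        have heq' : maxS φ τ N x = birk φ τ 0 x := heq
        simpa [birk_zero] using heq'
      linarith
    · have heq' : maxS φ τ N x = birk φ τ (m + 1) x := heq
      have h1 : maxS φ τ N x = φ x + birk φ τ m (τ x) := by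
        rw [heq']; exact birk_succ' m x
      have h2 : birk φ τ m (τ x) ≤ maxS φ τ N (τ x) :=
        le_maxS (le_trans (Nat.le_succ m) hnN) (τ x)
      linarith
  have hPi := integrable_maxS hτ hφi N
  have hPTi : Integrable (fun x => maxS φ τ N (τ x)) ν :=
    (hτ.integrable_comp (hPi.aestronglyMeasurable)).mpr hPi
  -- ∫_D (P - P∘τ) ≤ ∫_D φ
  have h1 : ∫ x in D, (maxS φ τ N x - maxS φ τ N (τ x)) ∂ν ≤ ∫ x in D, φ x ∂ν := by
    refine setIntegral_mono_on ((hPi.sub hPTi).integrableOn) (hφi.integrableOn) hDm key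
  -- ∫_D P = ∫ P
  have h2 : ∫ x in D, maxS φ τ N x ∂ν = ∫ x, maxS φ τ N x ∂ν := by
    rw [← integral_add_compl hDm hPi]
    have : ∫ x in Dᶜ, maxS φ τ N x ∂ν = 0 := by
      rw [setIntegral_congr_fun hDm.compl (g := fun _ => (0:ℝ)) ?_, integral_zero]
      intro x hx
      have h0 : ¬ (0 < maxS φ τ N x) := hx
      exact le_antisymm (not_lt.mp h0) (maxS_nonneg N x)
    rw [this, add_zero]
  -- ∫_D P∘τ ≤ ∫ P∘τ = ∫ P
  have h3 : ∫ x in D, maxS φ τ N (τ x) ∂ν ≤ ∫ x, maxS φ τ N (τ x) ∂ν := by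
    refine setIntegral_le_integral hPTi (Eventually.of_forall fun x => maxS_nonneg N (τ x))
  have h4 : ∫ x, maxS φ τ N (τ x) ∂ν = ∫ x, maxS φ τ N x ∂ν := by
    rw [← integral_map hτm.aemeasurable]
    · rw [hτ.map_eq]
    · rw [hτ.map_eq]; exact hPi.aestronglyMeasurable
  have h5 : ∫ x in D, (maxS φ τ N x - maxS φ τ N (τ x)) ∂ν
      = ∫ x in D, maxS φ τ N x ∂ν - ∫ x in D, maxS φ τ N (τ x) ∂ν :=
    integral_sub hPi.integrableOn hPTi.integrableOn
  linarith

/-- The set of points whose Birkhoff sums exceed `c n + K` for every `K` is null. -/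
theorem null_unbounded_drift (hτm : Measurable τ) (hτ : MeasurePreserving τ ν ν)
    (hE : PreErgodic τ ν) (hφm : Measurable φ) (hφi : Integrable φ ν)
    (hmean : ∫ x, φ x ∂ν = 0) {c : ℝ} (hc : 0 < c) :
    ν {x | ∀ K : ℕ, ∃ n : ℕ, c * n + K < birk φ τ n x} = 0 := by
  set A : Set X := {x | ∀ K : ℕ, ∃ n : ℕ, c * n + K < birk φ τ n x} with hA
  have hAm : MeasurableSet A := by
    have : A = ⋂ K : ℕ, ⋃ n : ℕ, {x | c * n + K < birk φ τ n x} := by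
      ext x; simp [hA, Set.mem_iInter, Set.mem_iUnion]
    rw [this]
    refine MeasurableSet.iInter fun K => MeasurableSet.iUnion fun n => ?_
    exact measurableSet_lt measurable_const (measurable_birk hφm hτm n)
  have hinv : τ ⁻¹' A = A := by
    ext x
    simp only [Set.mem_preimage, hA, Set.mem_setOf_eq]
    constructor
    · intro h K
      obtain ⟨K', hK'⟩ := exists_nat_ge (K + c - φ x)
      obtain ⟨n, hn⟩ := h K'
      refine ⟨n + 1, ?_⟩
      have hb : birk φ τ (n + 1) x = φ x + birk φ τ n (τ x) := birk_succ' n x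
      push_cast
      push_cast at hn
      linarith
    · intro h K
      obtain ⟨K', hK'⟩ := exists_nat_ge (max 1 (K + φ x - c))
      have hK'1 : (1:ℝ) ≤ K' := le_trans (le_max_left _ _) hK'
      have hK'2 : K + φ x - c ≤ K' := le_trans (le_max_right _ _) hK'
      obtain ⟨m, hm⟩ := h K'
      rcases m with _ | n
      · exfalso
        rw [birk_zero] at hm
        push_cast at hm
        linarith
      · refine ⟨n, ?_⟩
        have hb : birk φ τ (n + 1) x = φ x + birk φ τ n (τ x) := birk_succ' n x
        push_cast
        push_cast at hm
        linarith
  rcases hE.ae_empty_or_univ hAm hinv with h | h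
  · exact ae_eq_empty.mp h
  -- otherwise derive a contradiction
  exfalso
  have hA1 : ν A = 1 := by
    rw [measure_congr h, measure_univ]
  -- apply the maximal ergodic theorem to ψ = φ - c
  set ψ : X → ℝ := fun y => φ y - c with hψ
  have hψm : Measurable ψ := hφm.sub measurable_const
  have hψi : Integrable ψ ν := hφi.sub (integrable_const c)
  set D : ℕ → Set X := fun N => {x | 0 < maxS ψ τ N x} with hDdef
  have hDm : ∀ N, MeasurableSet (D N) := fun N =>
    measurableSet_lt measurable_const (measurable_maxS hψm hτm N)
  have hDmono : Monotone D := by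
    intro N M hNM x hx
    exact lt_of_lt_of_le hx (maxS_mono hNM x)
  have hsub : A ⊆ ⋃ N, D N := by
    intro x hx
    obtain ⟨n, hn⟩ := hx 0
    have hn' : 0 < birk ψ τ n x := by
      rw [hψ, birk_sub_const]
      push_cast at hn
      linarith
    exact Set.mem_iUnion.mpr ⟨n, lt_of_lt_of_le hn' (le_maxS le_rfl x)⟩
  have hDU : ν (⋃ N, D N) = 1 :=
    le_antisymm prob_le_one (hA1 ▸ measure_mono hsub)
  have hlim : Tendsto (fun N => ∫ x in D N, ψ x ∂ν) atTop (nhds (∫ x in ⋃ N, D N, ψ x ∂ν)) :=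
    tendsto_setIntegral_of_monotone hDm hDmono hψi.integrableOn
  have hge : 0 ≤ ∫ x in ⋃ N, D N, ψ x ∂ν :=
    ge_of_tendsto hlim (Eventually.of_forall fun N => maximal_ergodic hτ hτm hψm hψi N)
  -- but this integral equals ∫ψ = -c < 0
  have hcompl : ν (⋃ N, D N)ᶜ = 0 := by
    have := measure_compl (MeasurableSet.iUnion hDm) (measure_ne_top ν _)
    rw [hDU, measure_univ] at this
    simpa using this
  have hfull : ∫ x in ⋃ N, D N, ψ x ∂ν = ∫ x, ψ x ∂ν := by
    rw [← integral_add_compl (MeasurableSet.iUnion hDm) hψi]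
    have : ∫ x in (⋃ N, D N)ᶜ, ψ x ∂ν = 0 := by
      rw [Measure.restrict_eq_zero.mpr hcompl, integral_zero_measure]
    rw [this, add_zero]
  have hint : ∫ x, ψ x ∂ν = -c := by
    rw [hψ]
    rw [integral_sub hφi (integrable_const c), hmean, integral_const, measureReal_def, measure_univ]
    simp
  rw [hfull, hint] at hge
  linarith

/-- The set of points whose Birkhoff sums exceed `c n` in absolute value infinitely often
is null. -/
theorem null_freq_linear (hτm : Measurable τ) (hτ : MeasurePreserving τ ν ν)
    (hE : PreErgodic τ ν) (hφm : Measurable φ) (hφi : Integrable φ ν)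
    (hmean : ∫ x, φ x ∂ν = 0) {c : ℝ} (hc : 0 < c) :
    ν {x | ∃ᶠ n in atTop, c * n ≤ |birk φ τ n x|} = 0 := by
  have hc2 : 0 < c / 2 := by linarith
  set A₁ : Set X := {x | ∀ K : ℕ, ∃ n : ℕ, (c/2) * n + K < birk φ τ n x} with hA₁
  set φ' : X → ℝ := fun y => -φ y with hφ'
  set A₂ : Set X := {x | ∀ K : ℕ, ∃ n : ℕ, (c/2) * n + K < birk φ' τ n x} with hA₂
  have h₁ : ν A₁ = 0 := null_unbounded_drift hτm hτ hE hφm hφi hmean hc2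
  have h₂ : ν A₂ = 0 := by
    refine null_unbounded_drift hτm hτ hE hφm.neg hφi.neg ?_ hc2
    simp only [Pi.neg_apply]
    rw [integral_neg, hmean, neg_zero]
  refine measure_mono_null ?_ (measure_union_null h₁ h₂)
  intro x hx
  have hx' : (∃ᶠ n in atTop, c * n ≤ birk φ τ n x) ∨
      (∃ᶠ n in atTop, c * n ≤ -birk φ τ n x) := by
    rw [← frequently_or_distrib]
    exact hx.mono fun n hn => le_abs.mp hn
  have key : ∀ ψ : X → ℝ, (∃ᶠ n in atTop, c * n ≤ birk ψ τ n x) →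
      ∀ K : ℕ, ∃ n : ℕ, (c/2) * n + K < birk ψ τ n x := by
    intro ψ hfreq K
    obtain ⟨n, hnM, hn⟩ := (frequently_atTop.mp hfreq) (⌊(2 * K : ℝ) / c⌋₊ + 1)
    refine ⟨n, ?_⟩
    have h1 : ((2 * K : ℝ) / c) < n := by
      calc ((2 * K : ℝ) / c) < ⌊(2 * K : ℝ) / c⌋₊ + 1 := Nat.lt_floor_add_one _
        _ ≤ n := by exact_mod_cast hnM
    have h2 : (K : ℝ) < (c/2) * n := by
      rw [div_lt_iff₀ hc] at h1
      linarith
    linarith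
  rcases hx' with h | h
  · exact Or.inl (key φ h)
  · refine Or.inr (key φ' ?_)
    have : ∀ n : ℕ, birk φ' τ n x = - birk φ τ n x := fun n => birk_neg n x
    exact h.mono fun n hn => by rw [this n]; exact hn

/-- **Counting lemma**: if every return to `F` after time `≥ k` forces the Birkhoff sum to move
by at least `ε`, then the number of visits to `F` before time `N` is controlled by the maximal
Birkhoff sum. -/
lemma visits_card_le {ε : ℝ} (hε : 0 < ε) {k : ℕ} {F : Set X}
    (hF : ∀ y ∈ F, ∀ n, k ≤ n → ε ≤ |birk φ τ n y|) (x : X) {N : ℕ} (hN : N ≠ 0) :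
    ∃ n < N, (((Finset.range N).filter (fun n => τ^[n] x ∈ F)).card : ℝ)
      ≤ (2 * |birk φ τ n x| / ε + 3) * k := by
  classical
  set V := (Finset.range N).filter (fun n => τ^[n] x ∈ F) with hV
  have hNne : (Finset.range N).Nonempty := Finset.nonempty_range_iff.mpr hN
  obtain ⟨n₁, hn₁mem, hn₁⟩ := Finset.exists_mem_eq_sup' hNne (fun n => |birk φ τ n x|)
  set m := (Finset.range N).sup' hNne (fun n => |birk φ τ n x|) with hm
  refine ⟨n₁, Finset.mem_range.mp hn₁mem, ?_⟩
  rw [← hn₁]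
  have hm0 : 0 ≤ m := by rw [hn₁]; exact abs_nonneg _
  set f : ℕ → ℤ := fun n => ⌊birk φ τ n x / ε⌋ with hf
  set J : ℤ := ⌊m / ε⌋ + 1 with hJ
  have hJ0 : 0 ≤ ⌊m / ε⌋ := Int.floor_nonneg.mpr (div_nonneg hm0 hε.le)
  have hfloor : ∀ p q : ℕ, p ∈ V → q ∈ V → f p = f q → p ≤ q → q < p + k := by
    intro p q hp hq hfpq hpq
    by_contra hcon
    push_neg at hcon
    have hpF : τ^[p] x ∈ F := (Finset.mem_filter.mp hp).2
    have hkq : k ≤ q - p := by omega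
    have h1 : ε ≤ |birk φ τ (q - p) (τ^[p] x)| := hF _ hpF _ hkq
    rw [← birk_sub hpq x] at h1
    have h2 : |birk φ τ q x - birk φ τ p x| < ε := by
      have hfe : (⌊birk φ τ p x / ε⌋ : ℝ) = (⌊birk φ τ q x / ε⌋ : ℝ) := by
        exact_mod_cast congrArg (fun z : ℤ => (z : ℝ)) hfpq
      have h1' := Int.floor_le (birk φ τ p x / ε)
      have h2' := Int.lt_floor_add_one (birk φ τ p x / ε)
      have h3' := Int.floor_le (birk φ τ q x / ε)
      have h4' := Int.lt_floor_add_one (birk φ τ q x / ε)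
      have hd1 : birk φ τ q x / ε - birk φ τ p x / ε < 1 := by linarith
      have hd2 : (-1 : ℝ) < birk φ τ q x / ε - birk φ τ p x / ε := by linarith
      have hab : birk φ τ q x - birk φ τ p x
          = (birk φ τ q x / ε - birk φ τ p x / ε) * ε := by field_simp
      rw [abs_lt]
      constructor
      · have h := mul_lt_mul_of_pos_right hd2 hε
        rw [hab]; linarith
      · have h := mul_lt_mul_of_pos_right hd1 hε
        rw [hab]; linarith
    linarith
  have hfiber : ∀ j ∈ V.image f, (V.filter (fun n => f n = j)).card ≤ k := by
    intro j hj
    set W := V.filter (fun n => f n = j) with hW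
    have hWne : W.Nonempty := by
      obtain ⟨n, hn, hfn⟩ := Finset.mem_image.mp hj
      exact ⟨n, Finset.mem_filter.mpr ⟨hn, hfn⟩⟩
    set n₀ := W.min' hWne with hn₀
    have hn₀W : n₀ ∈ W := Finset.min'_mem _ _
    have hsub : W ⊆ Finset.Ico n₀ (n₀ + k) := by
      intro q hq
      have h1 : n₀ ≤ q := Finset.min'_le _ _ hq
      have h2 : q < n₀ + k := by
        refine hfloor n₀ q (Finset.mem_filter.mp hn₀W).1 (Finset.mem_filter.mp hq).1 ?_ h1
        rw [(Finset.mem_filter.mp hn₀W).2, (Finset.mem_filter.mp hq).2]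
      exact Finset.mem_Ico.mpr ⟨h1, h2⟩
    calc W.card ≤ (Finset.Ico n₀ (n₀ + k)).card := Finset.card_le_card hsub
      _ = k := by rw [Nat.card_Ico]; omega
  have himg : V.image f ⊆ Finset.Icc (-J) J := by
    intro j hj
    obtain ⟨n, hn, hfn⟩ := Finset.mem_image.mp hj
    have hnr : n ∈ Finset.range N := (Finset.mem_filter.mp hn).1
    have hb : |birk φ τ n x| ≤ m := Finset.le_sup' (f := fun n => |birk φ τ n x|) hnr
    have h1 : j ≤ J := by
      rw [← hfn]
      have hle : birk φ τ n x / ε ≤ m / ε :=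
        (div_le_div_iff_of_pos_right hε).mpr (le_trans (le_abs_self _) hb)
      calc f n ≤ ⌊m / ε⌋ := Int.floor_le_floor hle
        _ ≤ J := by omega
    have h2 : -J ≤ j := by
      rw [← hfn]
      have hle : (-(m / ε)) ≤ birk φ τ n x / ε := by
        rw [← neg_div]
        exact (div_le_div_iff_of_pos_right hε).mpr (le_trans (neg_le_neg hb) (neg_abs_le _))
      have hc1 : ⌊-(m / ε)⌋ ≤ f n := Int.floor_le_floor hle
      have hc2 : ⌊-(m / ε)⌋ = -⌈m / ε⌉ := Int.floor_neg
      have hc3 : ⌈m / ε⌉ ≤ ⌊m / ε⌋ + 1 := Int.ceil_le_floor_add_one _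
      omega
    exact Finset.mem_Icc.mpr ⟨h2, h1⟩
  have hcount : V.card ≤ (2 * J + 1).toNat * k := by
    calc V.card = ∑ j ∈ V.image f, (V.filter fun n => f n = j).card :=
          Finset.card_eq_sum_card_image f V
      _ ≤ ∑ _j ∈ V.image f, k := Finset.sum_le_sum hfiber
      _ = (V.image f).card * k := by rw [Finset.sum_const, smul_eq_mul]
      _ ≤ (Finset.Icc (-J) J).card * k :=
          Nat.mul_le_mul_right _ (Finset.card_le_card himg)
      _ = (2 * J + 1).toNat * k := by
          rw [Int.card_Icc]
          congr 1
          ring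
  have hJle : (J : ℝ) ≤ m / ε + 1 := by
    rw [hJ]; push_cast; linarith [Int.floor_le (m / ε)]
  have hk0 : (0:ℝ) ≤ (k:ℝ) := Nat.cast_nonneg k
  have h3 : (((2 * J + 1).toNat : ℕ) : ℝ) = 2 * (J:ℝ) + 1 := by
    rw [← Int.cast_natCast, Int.toNat_of_nonneg (by omega : (0:ℤ) ≤ 2 * J + 1)]
    push_cast; ring
  have hVle : (V.card : ℝ) ≤ (2 * (J:ℝ) + 1) * k := by
    have h2 : ((V.card : ℕ) : ℝ) ≤ (((2 * J + 1).toNat * k : ℕ) : ℝ) := by exact_mod_cast hcount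
    rw [Nat.cast_mul, h3] at h2
    exact h2
  calc (V.card : ℝ) ≤ (2 * (J:ℝ) + 1) * k := hVle
    _ ≤ (2 * (m / ε + 1) + 1) * k := by nlinarith
    _ = (2 * m / ε + 3) * k := by ring

end Atkinson

set_option maxHeartbeats 2000000 in
/-- **Atkinson's theorem** (Proposition): if `T` is an ergodic automorphism of a
probability space `(X, ν)` and `φ` is integrable with `∫ φ dν = 0`, then for every
`ε > 0` the set of points `x` for which the Birkhoff sums satisfy `|S(n,x)| < ε`
for infinitely many `n` has full measure. -/
theorem atkinson_small_birkhoff_sums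
    {X : Type*} [MeasurableSpace X] (ν : Measure X) [IsProbabilityMeasure ν]
    (T : X ≃ᵐ X) (hT : Ergodic (⇑T) ν)
    (φ : X → ℝ) (hφ : Integrable φ ν) (hmean : ∫ x, φ x ∂ν = 0) :
    ∀ ε > (0 : ℝ),
      ν {x : X | ∃ᶠ n in atTop, |∑ i ∈ Finset.range n, φ ((⇑T)^[i] x)| < ε} = 1 := by
  intro ε hε
  set τ : X → X := ⇑T with hτdef
  have hτm : Measurable τ := T.measurable
  have hτ : MeasurePreserving τ ν ν := hT.toMeasurePreserving
  have hE : PreErgodic τ ν := hT.toPreErgodic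
  -- replace φ by a measurable representative φ₀
  set φ₀ : X → ℝ := hφ.1.mk φ with hφ₀def
  have hφ₀m : Measurable φ₀ := hφ.1.stronglyMeasurable_mk.measurable
  have heq : φ =ᵐ[ν] φ₀ := hφ.1.ae_eq_mk
  have hφ₀i : Integrable φ₀ ν := hφ.congr heq
  have hmean₀ : ∫ x, φ₀ x ∂ν = 0 := by rw [← integral_congr_ae heq]; exact hmean
  have horb : ∀ᵐ x ∂ν, ∀ i : ℕ, φ (τ^[i] x) = φ₀ (τ^[i] x) :=
    ae_all_iff.mpr fun i => (hτ.iterate i).quasiMeasurePreserving.ae_eq_comp heq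
  set E : Set X := {x | ∃ᶠ n in atTop, |birk φ₀ τ n x| < ε} with hEdef
  have hsets : {x : X | ∃ᶠ n in atTop, |∑ i ∈ Finset.range n, φ ((⇑T)^[i] x)| < ε}
      =ᵐ[ν] E := by
    filter_upwards [horb] with x hx
    have hb : ∀ n, ∑ i ∈ Finset.range n, φ ((⇑T)^[i] x) = birk φ₀ τ n x := fun n =>
      Finset.sum_congr rfl fun i _ => hx i
    have : (∃ᶠ n in atTop, |∑ i ∈ Finset.range n, φ ((⇑T)^[i] x)| < ε)
        ↔ (∃ᶠ n in atTop, |birk φ₀ τ n x| < ε) := by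
      constructor
      · exact fun h => h.mono fun n hn => by rw [← hb n]; exact hn
      · exact fun h => h.mono fun n hn => by rw [hb n]; exact hn
    exact eq_iff_iff.mpr this
  rw [measure_congr hsets]
  -- measurability of E
  have hEm : MeasurableSet E := by
    have hre : E = ⋂ M : ℕ, ⋃ n : ℕ, ⋃ _ : M ≤ n, {x | |birk φ₀ τ n x| < ε} := by
      ext x
      simp [hEdef, Filter.frequently_atTop, Set.mem_iInter, Set.mem_iUnion]
    rw [hre]
    exact MeasurableSet.iInter fun M => MeasurableSet.iUnion fun n =>
      MeasurableSet.iUnion fun _ => measurableSet_lt (measurable_birk hφ₀m hτm n).abs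
        measurable_const
  -- suffices to show the complement is null
  rw [← prob_compl_eq_zero_iff hEm]
  by_contra hpos
  -- complement is a union of the sets F k
  set F : ℕ → Set X := fun k => {x | ∀ n, k ≤ n → ε ≤ |birk φ₀ τ n x|} with hFdef
  have hFm : ∀ k, MeasurableSet (F k) := by
    intro k
    have : F k = ⋂ n : ℕ, ⋂ _ : k ≤ n, {x | ε ≤ |birk φ₀ τ n x|} := by
      ext x; simp [hFdef, Set.mem_iInter]
    rw [this]
    exact MeasurableSet.iInter fun n => MeasurableSet.iInter fun _ =>
      measurableSet_le measurable_const (measurable_birk hφ₀m hτm n).abs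
  have hEc : Eᶜ = ⋃ k : ℕ, F k := by
    ext x
    simp only [hEdef, Set.mem_compl_iff, Set.mem_setOf_eq, not_frequently, not_lt,
      eventually_atTop, Set.mem_iUnion, hFdef]
  obtain ⟨k₁, hk₁⟩ : ∃ k, ν (F k) ≠ 0 := by
    by_contra hall
    push_neg at hall
    exact hpos (hEc ▸ measure_iUnion_null hall)
  set k : ℕ := k₁ + 1 with hkdef
  have hk1 : 1 ≤ k := Nat.le_add_left 1 k₁
  have hkν : ν (F k) ≠ 0 := by
    intro h0
    exact hk₁ (measure_mono_null (fun x hx n hn => hx n (le_trans (Nat.le_succ k₁) hn)) h0)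
  set δ : ℝ := (ν (F k)).toReal with hδdef
  have hδ : 0 < δ := ENNReal.toReal_pos hkν (measure_ne_top ν _)
  set c : ℝ := ε * δ / (8 * k) with hcdef
  have hkR : (0:ℝ) < k := by exact_mod_cast hk1
  have hc : 0 < c := by positivity
  -- null set of frequent linear growth
  have hR : ν {x | ∃ᶠ n in atTop, c * n ≤ |birk φ₀ τ n x|} = 0 :=
    null_freq_linear hτm hτ hE hφ₀m hφ₀i hmean₀ hc
  -- the sets H N
  set H : ℕ → Set X := fun N => {x | ∃ n, n < N ∧ c * N ≤ |birk φ₀ τ n x|} with hHdef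
  have hHm : ∀ N, MeasurableSet (H N) := by
    intro N
    have : H N = ⋃ n : ℕ, ⋃ _ : n < N, {x | c * N ≤ |birk φ₀ τ n x|} := by
      ext x; simp [hHdef, Set.mem_iUnion]
    rw [this]
    exact MeasurableSet.iUnion fun n => MeasurableSet.iUnion fun _ =>
      measurableSet_le measurable_const (measurable_birk hφ₀m hτm n).abs
  -- main estimate: ν (H N) ≥ δ/2 for N large
  set N₁ : ℕ := max 1 ⌈12 * k / δ⌉₊ with hN₁def
  have claimH : ∀ N, N₁ ≤ N → ENNReal.ofReal (δ / 2) ≤ ν (H N) := by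
    intro N hN
    have hN1 : 1 ≤ N := le_trans (le_max_left _ _) hN
    have hNne : N ≠ 0 := by omega
    have hNR : (0:ℝ) < N := by exact_mod_cast hN1
    have hN12 : 12 * k / δ ≤ N := by
      calc (12 * k / δ : ℝ) ≤ ⌈12 * (k:ℝ) / δ⌉₊ := Nat.le_ceil _
        _ ≤ N := by exact_mod_cast le_trans (le_max_right _ _) hN
    -- the visit count
    set V : X → ℕ := fun x => ((Finset.range N).filter (fun n => τ^[n] x ∈ F k)).card
      with hVdef
    have hVsum : ∀ x, (V x : ℝ)
        = ∑ n ∈ Finset.range N, (τ^[n] ⁻¹' (F k)).indicator (fun _ => (1:ℝ)) x := by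
      intro x
      rw [hVdef]
      simp only [Finset.card_filter]
      push_cast
      refine Finset.sum_congr rfl fun n _ => ?_
      by_cases hx : τ^[n] x ∈ F k <;> simp [Set.indicator_apply, hx]
    have hpre : ∀ n : ℕ, MeasurableSet (τ^[n] ⁻¹' (F k)) := fun n =>
      (hFm k).preimage (hτm.iterate n)
    have hVm : Measurable fun x => (V x : ℝ) := by
      have : (fun x => (V x : ℝ))
          = fun x => ∑ n ∈ Finset.range N, (τ^[n] ⁻¹' (F k)).indicator (fun _ => (1:ℝ)) x :=
        funext hVsum
      rw [this]
      exact Finset.measurable_sum _ fun n _ => measurable_const.indicator (hpre n)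
    have hVi : Integrable (fun x => (V x : ℝ)) ν := by
      have : (fun x => (V x : ℝ))
          = fun x => ∑ n ∈ Finset.range N, (τ^[n] ⁻¹' (F k)).indicator (fun _ => (1:ℝ)) x :=
        funext hVsum
      rw [this]
      exact integrable_finset_sum _ fun n _ => (integrable_const 1).indicator (hpre n)
    have hVint : ∫ x, (V x : ℝ) ∂ν = N * δ := by
      have h1 : ∫ x, (V x : ℝ) ∂ν
          = ∑ n ∈ Finset.range N, ∫ x, (τ^[n] ⁻¹' (F k)).indicator (fun _ => (1:ℝ)) x ∂ν := by
        rw [show (fun x => (V x : ℝ)) = fun x => ∑ n ∈ Finset.range N,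
            (τ^[n] ⁻¹' (F k)).indicator (fun _ => (1:ℝ)) x from funext hVsum]
        exact integral_finset_sum _ fun n _ => (integrable_const 1).indicator (hpre n)
      rw [h1]
      have h2 : ∀ n ∈ Finset.range N,
          ∫ x, (τ^[n] ⁻¹' (F k)).indicator (fun _ => (1:ℝ)) x ∂ν = δ := by
        intro n _
        rw [integral_indicator_const (1:ℝ) (hpre n), measureReal_def, (hτ.iterate n).measure_preimage
          (hFm k).nullMeasurableSet]
        simp [hδdef]
      rw [Finset.sum_congr rfl h2, Finset.sum_const, Finset.card_range, nsmul_eq_mul]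
    -- Markov: the set G where there are many visits
    set G : Set X := {x | δ * N / 2 ≤ (V x : ℝ)} with hGdef
    have hGm : MeasurableSet G := measurableSet_le measurable_const hVm
    have hGbound : δ / 2 ≤ (ν G).toReal := by
      have hVleN : ∀ x, (V x : ℝ) ≤ N := by
        intro x
        rw [hVdef]
        exact_mod_cast Nat.cast_le.mpr (le_trans (Finset.card_filter_le _ _)
          (le_of_eq (Finset.card_range N)))
      have hint1 : ∫ x in G, (V x : ℝ) ∂ν ≤ (ν G).toReal * N := by
        calc ∫ x in G, (V x : ℝ) ∂ν ≤ ∫ _x in G, (N:ℝ) ∂ν :=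
            setIntegral_mono_on hVi.integrableOn (integrable_const _).integrableOn hGm
              fun x _ => hVleN x
          _ = (ν G).toReal * N := by rw [setIntegral_const, smul_eq_mul, measureReal_def]
      have hint2 : ∫ x in Gᶜ, (V x : ℝ) ∂ν ≤ δ * N / 2 := by
        calc ∫ x in Gᶜ, (V x : ℝ) ∂ν ≤ ∫ _x in Gᶜ, (δ * N / 2) ∂ν :=
            setIntegral_mono_on hVi.integrableOn (integrable_const _).integrableOn hGm.compl
              fun x hx => le_of_not_ge hx
          _ = (ν Gᶜ).toReal * (δ * N / 2) := by rw [setIntegral_const, smul_eq_mul, measureReal_def]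
          _ ≤ 1 * (δ * N / 2) := by
              refine mul_le_mul_of_nonneg_right ?_ (by positivity)
              calc (ν Gᶜ).toReal ≤ (ν Set.univ).toReal := by
                    exact ENNReal.toReal_mono (measure_ne_top ν _) (measure_mono (Set.subset_univ _))
                _ = 1 := by simp
          _ = δ * N / 2 := one_mul _
      have hsplit : ∫ x, (V x : ℝ) ∂ν
          = ∫ x in G, (V x : ℝ) ∂ν + ∫ x in Gᶜ, (V x : ℝ) ∂ν :=
        (integral_add_compl hGm hVi).symm
      have : N * δ ≤ (ν G).toReal * N + δ * N / 2 := by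
        rw [← hVint, hsplit]; linarith
      nlinarith [ENNReal.toReal_nonneg (a := ν G)]
    -- G ⊆ H N via the counting lemma
    have hGH : G ⊆ H N := by
      intro x hx
      have hxV : δ * N / 2
          ≤ ((((Finset.range N).filter (fun n => τ^[n] x ∈ F k)).card : ℕ) : ℝ) := hx
      have hFprop : ∀ y ∈ F k, ∀ n, k ≤ n → ε ≤ |birk φ₀ τ n y| := fun y hy => hy
      obtain ⟨n, hnN, hcount⟩ :=
        visits_card_le (φ := φ₀) (τ := τ) (F := F k) hε hFprop x hNne
      refine ⟨n, hnN, ?_⟩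
      set b : ℝ := |birk φ₀ τ n x| with hbdef
      have hb0 : 0 ≤ b := abs_nonneg _
      have h1 : δ * N / 2 ≤ (2 * b / ε + 3) * k := le_trans hxV hcount
      have h2 : 12 * k ≤ δ * N := by
        rw [div_le_iff₀ hδ] at hN12
        linarith
      have e1 : (2 * b / ε + 3) * k * ε = 2 * b * k + 3 * k * ε := by
        field_simp
      have h1' : δ * N / 2 * ε ≤ 2 * b * k + 3 * k * ε := by
        have := mul_le_mul_of_nonneg_right h1 hε.le
        rw [e1] at this
        linarith
      have h2' : 3 * k * ε ≤ δ * N * ε / 4 := by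
        nlinarith [mul_le_mul_of_nonneg_right h2 hε.le]
      have h7 : δ * N * ε / 4 ≤ 2 * b * k := by linarith
      rw [hcdef, div_mul_eq_mul_div, div_le_iff₀ (by positivity : (0:ℝ) < 8 * k)]
      linarith
    calc ENNReal.ofReal (δ / 2) ≤ ν G := by
          rw [← ENNReal.ofReal_toReal (measure_ne_top ν G)]
          exact ENNReal.ofReal_le_ofReal hGbound
      _ ≤ ν (H N) := measure_mono hGH
  -- pass to the limsup of the H N
  set U : ℕ → Set X := fun M => ⋃ N : ℕ, ⋃ _ : M ≤ N, H N with hUdef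
  have hUm : ∀ M, MeasurableSet (U M) := fun M =>
    MeasurableSet.iUnion fun N => MeasurableSet.iUnion fun _ => hHm N
  have hUanti : Antitone U := by
    intro M M' hMM' x hx
    obtain ⟨N, hN⟩ := Set.mem_iUnion.mp hx
    obtain ⟨hMN, hxN⟩ := Set.mem_iUnion.mp hN
    exact Set.mem_iUnion.mpr ⟨N, Set.mem_iUnion.mpr ⟨le_trans hMM' hMN, hxN⟩⟩
  have hUge : ∀ M, ENNReal.ofReal (δ / 2) ≤ ν (U M) := by
    intro M
    refine le_trans (claimH (max M N₁) (le_max_right _ _)) (measure_mono ?_)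
    intro x hx
    exact Set.mem_iUnion.mpr ⟨max M N₁, Set.mem_iUnion.mpr ⟨le_max_left _ _, hx⟩⟩
  have hlim : Tendsto (fun M => ν (U M)) atTop (nhds (ν (⋂ M, U M))) :=
    tendsto_measure_iInter_atTop (fun M => (hUm M).nullMeasurableSet) hUanti
      ⟨0, measure_ne_top ν _⟩
  have hIge : ENNReal.ofReal (δ / 2) ≤ ν (⋂ M, U M) :=
    ge_of_tendsto hlim (Eventually.of_forall hUge)
  -- the intersection is contained in the null set of frequent linear growth
  have hIsub : (⋂ M, U M) ⊆ {x | ∃ᶠ n in atTop, c * n ≤ |birk φ₀ τ n x|} := by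
    intro x hx
    rw [Set.mem_setOf_eq, frequently_atTop]
    intro M
    -- B bounds the sums up to time M
    set B : ℝ := (Finset.range (M + 1)).sup' Finset.nonempty_range_add_one
      (fun j => |birk φ₀ τ j x|) with hBdef
    obtain ⟨t, ht⟩ := exists_nat_ge (max (M:ℝ) (B / c + 1))
    have hxt : x ∈ U t := Set.mem_iInter.mp hx t
    obtain ⟨N, hN⟩ := Set.mem_iUnion.mp hxt
    obtain ⟨htN, hxN⟩ := Set.mem_iUnion.mp hN
    obtain ⟨n, hnN, hcn⟩ := hxN
    have htR : (B / c + 1) ≤ (t:ℝ) := le_trans (le_max_right _ _) ht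
    have hMt : (M:ℝ) ≤ (t:ℝ) := le_trans (le_max_left _ _) ht
    have htN' : (t:ℝ) ≤ N := by exact_mod_cast htN
    have hBlt : B < c * N := by
      have : B / c + 1 ≤ (N:ℝ) := le_trans htR htN'
      rw [div_add' _ _ _ (ne_of_gt hc)] at this
      rw [div_le_iff₀ hc] at this
      nlinarith
    have hnM : M < n := by
      by_contra hcon
      push_neg at hcon
      have hmem : n ∈ Finset.range (M + 1) := Finset.mem_range.mpr (Nat.lt_succ_of_le hcon)
      have : |birk φ₀ τ n x| ≤ B :=
        Finset.le_sup' (f := fun j => |birk φ₀ τ j x|) hmem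
      linarith
    refine ⟨n, le_of_lt hnM, ?_⟩
    calc c * n ≤ c * N := by
          have hnn : (n:ℝ) ≤ (N:ℝ) := by exact_mod_cast le_of_lt hnN
          exact mul_le_mul_of_nonneg_left hnn hc.le
      _ ≤ |birk φ₀ τ n x| := hcn
  have : ENNReal.ofReal (δ / 2) ≤ 0 := le_trans hIge (le_trans (measure_mono hIsub) hR.le)
  have hpos2 : 0 < ENNReal.ofReal (δ / 2) := ENNReal.ofReal_pos.mpr (by linarith)
  exact absurd (le_antisymm this bot_le) (ne_of_gt hpos2)
end

section
/- Let $T\colon X \to X$ be a measure-preserving automorphism of a Borel probability space $(X,\mu)$ and $\phi\colon X \to \mathbb{R}$ integrable. Let $S(n,x) = \sum_{i=0}^{n-1}\phi(T^i(x))$ and suppose the $T$-invariant set $P = \{x : \lim_{n\to\infty} S(n,x) = \infty\}$ has $\mu(P) > 0$. Then, with $\hat\phi(x) = \lim_{n\to\infty} S(n,x)/n$ (defined $\mu$-a.e.), one has $\int_P \hat\phi\, d\mu > 0$; in particular $\hat\phi(x) > 0$ on a set of positive $\mu$-measure. -/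
open MeasureTheory Filter Finset
open scoped ENNReal NNReal

private lemma birkhoff_shift {X : Type*} (T : X → X) (φ : X → ℝ) (n m : ℕ) (x : X) :
    ∑ i ∈ Finset.range (n + m), φ (T^[i] x)
      = (∑ i ∈ Finset.range n, φ (T^[i] x))
        + ∑ i ∈ Finset.range m, φ (T^[i] (T^[n] x)) := by
  induction m with
  | zero => simp
  | succ m ih =>
    rw [← Nat.add_assoc, Finset.sum_range_succ, ih, Finset.sum_range_succ, add_assoc]
    congr 2
    rw [Nat.add_comm n m, Function.iterate_add_apply]

private lemma sep_card_le {F : Finset ℕ} {c : ℕ → ℝ} {ε C : ℝ} (hε : 0 < ε) (hC0 : 0 ≤ C)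
    (h0 : ∀ n ∈ F, 0 ≤ c n) (hC : ∀ n ∈ F, c n ≤ C)
    (hsep : ∀ m ∈ F, ∀ n ∈ F, m < n → c m + ε ≤ c n) :
    (F.card : ℝ) * ε ≤ C + ε := by
  classical
  have key : ∀ n, n ∈ F → ((F.filter (· < n)).card : ℝ) * ε ≤ c n := by
    intro n
    induction n using Nat.strong_induction_on with
    | _ n ih =>
      intro hn
      rcases (F.filter (· < n)).eq_empty_or_nonempty with h | h
      · rw [h]; simpa using h0 n hn
      · have hmm := (F.filter (· < n)).max'_mem h
        set m := (F.filter (· < n)).max' h with hmdef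
        have hmF : m ∈ F := (Finset.mem_filter.mp hmm).1
        have hmn : m < n := (Finset.mem_filter.mp hmm).2
        have hfe : F.filter (· < n) = insert m (F.filter (· < m)) := by
          ext k
          simp only [Finset.mem_insert, Finset.mem_filter]
          constructor
          · rintro ⟨hkF, hkn⟩
            rcases lt_or_ge k m with h' | h'
            · exact Or.inr ⟨hkF, h'⟩
            · have hle : k ≤ (F.filter (· < n)).max' h :=
                Finset.le_max' (F.filter (· < n)) k (Finset.mem_filter.mpr ⟨hkF, hkn⟩)
              exact Or.inl (by omega)
          · rintro (rfl | ⟨hkF, hkm⟩)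
            · exact ⟨hmF, hmn⟩
            · exact ⟨hkF, hkm.trans hmn⟩
        rw [hfe, Finset.card_insert_of_notMem (by simp)]
        have h1 := ih m hmn hmF
        have h2 := hsep m hmF n hn hmn
        push_cast
        linarith
  rcases F.eq_empty_or_nonempty with h | h
  · rw [h]
    simp only [Finset.card_empty, Nat.cast_zero, zero_mul]
    positivity
  · have hMm := F.max'_mem h
    set M := F.max' h with hMdef
    have hfe : F = insert M (F.filter (· < M)) := by
      ext k
      simp only [Finset.mem_insert, Finset.mem_filter]
      constructor
      · intro hk
        rcases lt_or_ge k M with h' | h'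
        · exact Or.inr ⟨hk, h'⟩
        · have hle : k ≤ F.max' h := Finset.le_max' F k hk
          exact Or.inl (by omega)
      · rintro (rfl | ⟨hk, _⟩)
        · exact hMm
        · exact hk
    have h1 := key M hMm
    have h2 := hC M hMm
    rw [hfe, Finset.card_insert_of_notMem (by simp)]
    push_cast
    linarith

private lemma atkinson_core {X : Type*} [MeasurableSpace X] (μ : Measure X)
    [IsProbabilityMeasure μ] (T : X ≃ᵐ X) (hT : MeasurePreserving (⇑T) μ μ)
    (φ : X → ℝ) (hφm : Measurable φ) :
    μ {x : X | Tendsto (fun n => ∑ i ∈ Finset.range n, φ ((⇑T)^[i] x)) atTop atTop ∧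
        Tendsto (fun n => (∑ i ∈ Finset.range n, φ ((⇑T)^[i] x)) / (n : ℝ)) atTop (nhds 0)}
      = 0 := by
  classical
  set S : ℕ → X → ℝ := fun n x => ∑ i ∈ Finset.range n, φ ((⇑T)^[i] x) with hSdef
  have hSm : ∀ n, Measurable (S n) := fun n =>
    Finset.measurable_sum _ fun i _ => hφm.comp (T.measurable.iterate i)
  have hshift : ∀ (n m : ℕ) (x : X), S (n + m) x = S n x + S m ((⇑T)^[n] x) :=
    fun n m x => birkhoff_shift (⇑T) φ n m x
  have hS0 : ∀ x, S 0 x = 0 := fun x => by simp [hSdef]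
  set E : Set X := {x | Tendsto (fun n => S n x) atTop atTop ∧
      Tendsto (fun n => S n x / (n : ℝ)) atTop (nhds 0)} with hEdef
  have hE : MeasurableSet E := by
    have h1 : MeasurableSet {x | Tendsto (fun n => S n x) atTop atTop} :=
      measurableSet_tendsto atTop hSm
    have h2 : MeasurableSet {x | Tendsto (fun n => S n x / (n : ℝ)) atTop (nhds 0)} :=
      measurableSet_tendsto (nhds 0) fun n => (hSm n).div_const _
    rw [hEdef, Set.setOf_and]
    exact h1.inter h2
  by_contra hμE
  -- the sets Aq of points in E whose sums stay above 1/(q+1) for all positive times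
  set A : ℕ → Set X := fun q =>
    E ∩ ⋂ (m : ℕ), {x | 1 / ((q : ℝ) + 1) ≤ S (m + 1) x} with hAdef
  have hAmeas : ∀ q, MeasurableSet (A q) := by
    intro q
    exact hE.inter (MeasurableSet.iInter fun m =>
      measurableSet_le measurable_const (hSm (m + 1)))
  have hA'S : ∀ q, ∀ x ∈ A q, ∀ m, 1 ≤ m → 1 / ((q : ℝ) + 1) ≤ S m x := by
    intro q x hx m hm
    have := Set.mem_iInter.mp hx.2 (m - 1)
    simpa [Nat.sub_add_cancel hm] using this
  -- every point of E eventually enters some Aq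
  have hcover : E ⊆ ⋃ (q : ℕ) (k : ℕ), (⇑T)^[k] ⁻¹' (A q) := by
    intro x hx
    obtain ⟨hx1, hx2⟩ := hx
    obtain ⟨N, hN⟩ := Filter.eventually_atTop.mp (hx1.eventually_ge_atTop 1)
    obtain ⟨n₀, hn₀mem, hn₀min⟩ :=
      Finset.exists_min_image (Finset.range (N + 1)) (fun n => S n x) ⟨0, by simp⟩
    have hglobal : ∀ k, S n₀ x ≤ S k x := by
      intro k
      rcases le_or_gt k N with hk | hk
      · exact hn₀min k (Finset.mem_range.mpr (Nat.lt_succ_of_le hk))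
      · have h0 : S n₀ x ≤ S 0 x := hn₀min 0 (by simp)
        have h1 : (1 : ℝ) ≤ S k x := hN k hk.le
        have h2 := hS0 x
        linarith
    set F := (Finset.range (N + 1)).filter (fun n => ∀ k, S n x ≤ S k x) with hF
    have hFne : F.Nonempty := ⟨n₀, Finset.mem_filter.mpr ⟨hn₀mem, hglobal⟩⟩
    set n' := F.max' hFne with hn'
    have hn'F := F.max'_mem hFne
    have hn'glob : ∀ k, S n' x ≤ S k x := (Finset.mem_filter.mp hn'F).2
    set z := (⇑T)^[n'] x with hzdef
    have hstrict : ∀ m, 1 ≤ m → 0 < S m z := by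
      intro m hm
      have hle : S n' x ≤ S (n' + m) x := hn'glob _
      have hne : S n' x ≠ S (n' + m) x := by
        intro heq
        have hg : ∀ k, S (n' + m) x ≤ S k x := fun k => heq ▸ hn'glob k
        have hrng : n' + m ∈ Finset.range (N + 1) := by
          by_contra hc
          have hNlt : N < n' + m := by
            by_contra hc2
            exact hc (Finset.mem_range.mpr (by omega))
          have h1 : (1 : ℝ) ≤ S (n' + m) x := hN _ (by omega)
          have h2 : S (n' + m) x ≤ S 0 x := hg 0
          have h3 := hS0 x
          linarith
        have hmem : n' + m ∈ F := Finset.mem_filter.mpr ⟨hrng, hg⟩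
        have := Finset.le_max' F _ hmem
        omega
      have h4 := hshift n' m x
      have h5 := lt_of_le_of_ne hle hne
      rw [hzdef]
      linarith
    have haddT : Tendsto (fun m => n' + m) atTop atTop :=
      tendsto_atTop_atTop.mpr fun b => ⟨b, fun a ha => le_trans ha (Nat.le_add_left a n')⟩
    have hz1 : Tendsto (fun m => S m z) atTop atTop := by
      have h1 : Tendsto (fun m => S (n' + m) x) atTop atTop := hx1.comp haddT
      have h2 : Tendsto (fun m => S (n' + m) x + -(S n' x)) atTop atTop :=
        tendsto_atTop_add_const_right _ _ h1
      exact h2.congr fun m => by rw [hshift n' m x]; ring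
    have hz2 : Tendsto (fun m => S m z / (m : ℝ)) atTop (nhds 0) := by
      have hA1 : Tendsto (fun m : ℕ => S (n' + m) x / ((n' + m : ℕ) : ℝ)) atTop (nhds 0) :=
        hx2.comp haddT
      have hB1 : Tendsto (fun m : ℕ => ((n' + m : ℕ) : ℝ) / (m : ℝ)) atTop (nhds 1) := by
        have h1 : Tendsto (fun m : ℕ => (n' : ℝ) / (m : ℝ) + 1) atTop (nhds (0 + 1)) :=
          (tendsto_const_div_atTop_nhds_zero_nat _).add tendsto_const_nhds
        rw [zero_add] at h1
        apply Tendsto.congr' ?_ h1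
        filter_upwards [eventually_ge_atTop 1] with m hm
        have hm0 : (m : ℝ) ≠ 0 := Nat.cast_ne_zero.mpr (by omega)
        push_cast
        field_simp
      have hAB : Tendsto (fun m : ℕ => S (n' + m) x / (m : ℝ)) atTop (nhds 0) := by
        have h2 := hA1.mul hB1
        rw [zero_mul] at h2
        apply Tendsto.congr' ?_ h2
        filter_upwards [eventually_ge_atTop 1] with m hm
        have hm0 : ((n' + m : ℕ) : ℝ) ≠ 0 := Nat.cast_ne_zero.mpr (by omega)
        field_simp
      have hC1 : Tendsto (fun m : ℕ => S n' x / (m : ℝ)) atTop (nhds 0) :=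
        tendsto_const_div_atTop_nhds_zero_nat _
      have hsub := hAB.sub hC1
      rw [sub_zero] at hsub
      apply hsub.congr
      intro m
      rw [hshift n' m x]
      ring
    obtain ⟨M, hM⟩ := Filter.eventually_atTop.mp (hz1.eventually_ge_atTop 1)
    have hKne : (Finset.Icc 1 (M + 1)).Nonempty := ⟨1, Finset.mem_Icc.mpr ⟨le_refl 1, by omega⟩⟩
    set c₀ := (Finset.Icc 1 (M + 1)).inf' hKne (fun m => S m z) with hc₀
    have hc₀pos : 0 < c₀ := by
      rw [hc₀, Finset.lt_inf'_iff]
      exact fun m hm => hstrict m (Finset.mem_Icc.mp hm).1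
    have hrpos : 0 < min 1 c₀ := lt_min one_pos hc₀pos
    have hrle : ∀ m, 1 ≤ m → min 1 c₀ ≤ S m z := by
      intro m hm
      rcases le_or_gt m (M + 1) with h' | h'
      · exact le_trans (min_le_right _ _) (Finset.inf'_le _ (Finset.mem_Icc.mpr ⟨hm, h'⟩))
      · exact le_trans (min_le_left _ _) (hM m (by omega))
    obtain ⟨q, hq⟩ := exists_nat_one_div_lt hrpos
    refine Set.mem_iUnion.mpr ⟨q, Set.mem_iUnion.mpr ⟨n', ?_⟩⟩
    refine Set.mem_preimage.mpr ⟨⟨hz1, hz2⟩, ?_⟩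
    exact Set.mem_iInter.mpr fun m => le_trans hq.le (hrle (m + 1) (by omega))
  -- some Aq has positive measure
  have hq' : ∃ q, μ (A q) ≠ 0 := by
    by_contra hcon
    push_neg at hcon
    refine hμE (measure_mono_null hcover ?_)
    refine measure_iUnion_null fun q => measure_iUnion_null fun k => ?_
    exact (hT.iterate k).quasiMeasurePreserving.preimage_null (hcon q)
  obtain ⟨q, hq⟩ := hq'
  set ε : ℝ := 1 / ((q : ℝ) + 1) with hεdef
  have hεpos : 0 < ε := by positivity
  have hApos : 0 < μ (A q) := pos_iff_ne_zero.mpr hq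
  have hAfin : μ (A q) ≠ ⊤ := measure_ne_top μ _
  set a := (μ (A q)).toReal with ha
  have hapos : 0 < a := ENNReal.toReal_pos hq hAfin
  -- Egorov
  obtain ⟨t, htsub, htmeas, htμ, htunif⟩ :=
    tendstoUniformlyOn_of_ae_tendsto (f := fun n x => S n x / (n : ℝ)) (g := fun _ => (0 : ℝ))
      (μ := μ) (s := A q)
      (fun n => ((hSm n).div_const _).stronglyMeasurable)
      stronglyMeasurable_const (hAmeas q) (measure_ne_top μ _)
      (ae_of_all μ fun x hx => hx.1.2) (half_pos hapos)
  set B : Set X := A q \ t with hBdef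
  have hBmeas : MeasurableSet B := (hAmeas q).diff htmeas
  have hβfin : μ B ≠ ⊤ := measure_ne_top μ _
  set b := (μ B).toReal with hbdef
  have hab : a / 2 ≤ b := by
    have hcov2 : A q ⊆ t ∪ B := fun y hy => (em (y ∈ t)).elim Or.inl fun h => Or.inr ⟨hy, h⟩
    have h1 : μ (A q) ≤ ENNReal.ofReal (a / 2) + μ B :=
      le_trans (le_trans (measure_mono hcov2) (measure_union_le _ _))
        (add_le_add htμ le_rfl)
    have h2 := ENNReal.toReal_mono
      (ENNReal.add_ne_top.mpr ⟨ENNReal.ofReal_ne_top, hβfin⟩) h1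
    rw [ENNReal.toReal_add ENNReal.ofReal_ne_top hβfin,
      ENNReal.toReal_ofReal (by positivity), ← ha] at h2
    rw [hbdef]
    linarith
  have hbpos : 0 < b := lt_of_lt_of_le (by positivity) hab
  -- uniform convergence threshold
  set δ : ℝ := ε * b / 4 with hδdef
  have hδpos : 0 < δ := by positivity
  obtain ⟨N₁, hN₁⟩ :=
    Filter.eventually_atTop.mp ((Metric.tendstoUniformlyOn_iff.mp htunif) δ hδpos)
  set N₀ := max N₁ 1 with hN₀def
  set N : ℕ := 2 * N₀ + 4 + ⌈(8 : ℝ) / b⌉₊ with hNdef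
  have hN₀N : N₀ ≤ N := by omega
  set C : ℝ := δ * (N : ℝ) with hCdef
  have hC0 : 0 ≤ C := by positivity
  set D : ℕ → Set X := fun n => A q ∩ {x | S n x ≤ C} with hDdef
  have hDmeas : ∀ n, MeasurableSet (D n) := fun n =>
    (hAmeas q).inter (measurableSet_le (hSm n) measurable_const)
  have hTsymm : MeasurePreserving (⇑T.symm) μ μ := MeasurePreserving.symm T hT
  have hμD : ∀ n, μ ((⇑T.symm)^[n] ⁻¹' D n) = μ (D n) := fun n =>
    (hTsymm.iterate n).measure_preimage (hDmeas n).nullMeasurableSet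
  have hBnmeas : ∀ n, MeasurableSet ((⇑T.symm)^[n] ⁻¹' D n) := fun n =>
    (hDmeas n).preimage (T.symm.measurable.iterate n)
  -- lower bound for each n in [N₀, N]
  have hBD : ∀ n ∈ Finset.Icc N₀ N, B ⊆ D n := by
    intro n hn y hy
    obtain ⟨hn1, hn2⟩ := Finset.mem_Icc.mp hn
    refine ⟨hy.1, ?_⟩
    have hdist := hN₁ n (le_trans (le_max_left _ _) hn1) y hy
    have hn1' : 1 ≤ n := le_trans (le_max_right N₁ 1) hn1
    have hnpos : (0 : ℝ) < (n : ℝ) := by exact_mod_cast Nat.pos_of_ne_zero (by omega)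
    have habs : |S n y / (n : ℝ)| < δ := by
      rw [Real.dist_eq] at hdist
      simpa using hdist
    have h1 : S n y / (n : ℝ) < δ := lt_of_le_of_lt (le_abs_self _) habs
    have h2 : S n y < δ * (n : ℝ) := by
      rw [div_lt_iff₀ hnpos] at h1
      linarith
    have h3 : δ * (n : ℝ) ≤ δ * (N : ℝ) :=
      mul_le_mul_of_nonneg_left (by exact_mod_cast hn2) hδpos.le
    show S n y ≤ C
    rw [hCdef]
    linarith
  have hlow : ∀ n ∈ Finset.Icc N₀ N, μ B ≤ μ ((⇑T.symm)^[n] ⁻¹' D n) := by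
    intro n hn
    rw [hμD n]
    exact measure_mono (hBD n hn)
  -- iterate inversion
  have hback : ∀ (k n : ℕ), k ≤ n → ∀ y : X,
      (⇑T)^[k] ((⇑T.symm)^[n] y) = (⇑T.symm)^[n - k] y := by
    intro k n hk y
    have h1 : (⇑T.symm)^[n] y = (⇑T.symm)^[k] ((⇑T.symm)^[n - k] y) := by
      rw [← Function.iterate_add_apply]
      congr 1
      omega
    rw [h1]
    exact (Function.LeftInverse.iterate T.apply_symm_apply k) _
  -- the counting bound
  set k : ℕ := ⌈(C + ε) / ε⌉₊ with hkdef
  have hcard : ∀ y : X,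
      ((Finset.Icc N₀ N).filter (fun n => y ∈ (⇑T.symm)^[n] ⁻¹' D n)).card ≤ k := by
    intro y
    set F := (Finset.Icc N₀ N).filter (fun n => y ∈ (⇑T.symm)^[n] ⁻¹' D n) with hFdef
    have hmemF : ∀ n ∈ F, ((⇑T.symm)^[n] y ∈ A q ∧ S n ((⇑T.symm)^[n] y) ≤ C) ∧ 1 ≤ n := by
      intro n hn
      have h1 := Finset.mem_filter.mp hn
      have h2 : N₀ ≤ n := (Finset.mem_Icc.mp h1.1).1
      exact ⟨h1.2, le_trans (le_max_right N₁ 1) h2⟩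
    have h1 : (F.card : ℝ) * ε ≤ C + ε := by
      refine sep_card_le (c := fun n => S n ((⇑T.symm)^[n] y)) hεpos hC0 ?_ ?_ ?_
      · intro n hn
        obtain ⟨⟨hA1, _⟩, hn1⟩ := hmemF n hn
        exact le_trans hεpos.le (hA'S q _ hA1 n hn1)
      · intro n hn
        exact (hmemF n hn).1.2
      · intro m hm n hn hmn
        obtain ⟨⟨hAm, _⟩, _⟩ := hmemF m hm
        obtain ⟨⟨hAn, _⟩, _⟩ := hmemF n hn
        have hkey : S n ((⇑T.symm)^[n] y)
            = S (n - m) ((⇑T.symm)^[n] y) + S m ((⇑T.symm)^[m] y) := by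
          have h2 := hshift (n - m) m ((⇑T.symm)^[n] y)
          rw [hback (n - m) n (by omega) y] at h2
          have h3 : n - m + m = n := by omega
          rw [h3] at h2
          have h4 : n - (n - m) = m := by omega
          rw [h4] at h2
          exact h2
        have h5 : ε ≤ S (n - m) ((⇑T.symm)^[n] y) := hA'S q _ hAn (n - m) (by omega)
        linarith
    have h2 : (F.card : ℝ) ≤ (C + ε) / ε := by
      rw [le_div_iff₀ hεpos]
      exact h1
    exact_mod_cast h2.trans (Nat.le_ceil _)
  -- summing up
  have hsum : ∑ n ∈ Finset.Icc N₀ N, μ ((⇑T.symm)^[n] ⁻¹' D n) ≤ (k : ℝ≥0∞) := by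
    have heq : ∀ n ∈ Finset.Icc N₀ N, μ ((⇑T.symm)^[n] ⁻¹' D n)
        = ∫⁻ y, ((⇑T.symm)^[n] ⁻¹' D n).indicator (fun _ => (1 : ℝ≥0∞)) y ∂μ := by
      intro n _
      exact (lintegral_indicator_one (hBnmeas n)).symm
    calc ∑ n ∈ Finset.Icc N₀ N, μ ((⇑T.symm)^[n] ⁻¹' D n)
        = ∑ n ∈ Finset.Icc N₀ N, ∫⁻ y,
            ((⇑T.symm)^[n] ⁻¹' D n).indicator (fun _ => (1 : ℝ≥0∞)) y ∂μ :=
          Finset.sum_congr rfl heq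
      _ = ∫⁻ y, ∑ n ∈ Finset.Icc N₀ N,
          ((⇑T.symm)^[n] ⁻¹' D n).indicator (fun _ => (1 : ℝ≥0∞)) y ∂μ :=
          (lintegral_finset_sum _ (fun n _ => measurable_const.indicator (hBnmeas n))).symm
      _ ≤ ∫⁻ _, (k : ℝ≥0∞) ∂μ := by
          refine lintegral_mono fun y => ?_
          have h1 : ∑ n ∈ Finset.Icc N₀ N,
              ((⇑T.symm)^[n] ⁻¹' D n).indicator (fun _ => (1 : ℝ≥0∞)) y
              = (((Finset.Icc N₀ N).filter (fun n => y ∈ (⇑T.symm)^[n] ⁻¹' D n)).card :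
                  ℝ≥0∞) := by
            rw [← Finset.sum_boole]
            refine Finset.sum_congr rfl fun n _ => ?_
            simp [Set.indicator_apply]
          rw [h1]
          exact (Nat.cast_le (α := ℝ≥0∞)).mpr (hcard y)
      _ = (k : ℝ≥0∞) := by simp
  have hsumlow : ((Finset.Icc N₀ N).card : ℝ≥0∞) * μ B
      ≤ ∑ n ∈ Finset.Icc N₀ N, μ ((⇑T.symm)^[n] ⁻¹' D n) := by
    calc ((Finset.Icc N₀ N).card : ℝ≥0∞) * μ B
        = ∑ _n ∈ Finset.Icc N₀ N, μ B := by rw [Finset.sum_const, nsmul_eq_mul]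
      _ ≤ _ := Finset.sum_le_sum hlow
  have hfinalE : ((N + 1 - N₀ : ℕ) : ℝ) * b ≤ (k : ℝ) := by
    have h := le_trans hsumlow hsum
    rw [Nat.card_Icc] at h
    have h2 := ENNReal.toReal_mono (ENNReal.natCast_ne_top k) h
    rw [ENNReal.toReal_mul, ENNReal.toReal_natCast, ENNReal.toReal_natCast] at h2
    exact h2
  have hkinReal : (k : ℝ) < (C + ε) / ε + 1 := Nat.ceil_lt_add_one (by positivity)
  have hCe : (C + ε) / ε + 1 = b * (N : ℝ) / 4 + 2 := by
    rw [hCdef, hδdef]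
    field_simp
    ring
  have hcast : ((N + 1 - N₀ : ℕ) : ℝ) = (N : ℝ) + 1 - (N₀ : ℝ) := by
    rw [Nat.cast_sub (by omega)]
    push_cast
    ring
  have hNge : 2 * (N₀ : ℝ) + 4 + 8 / b ≤ (N : ℝ) := by
    have h8 := Nat.le_ceil ((8 : ℝ) / b)
    have hNc : (N : ℝ) = 2 * (N₀ : ℝ) + 4 + (⌈(8 : ℝ) / b⌉₊ : ℝ) := by
      rw [hNdef]; push_cast; ring
    linarith
  have hmain : ((N : ℝ) + 1 - (N₀ : ℝ)) * b < b * (N : ℝ) / 4 + 2 := by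
    rw [hcast] at hfinalE
    linarith
  have hb8 : b * (8 / b) = 8 := by field_simp
  nlinarith [mul_le_mul_of_nonneg_left hNge hbpos.le, hb8, hmain, hbpos,
    mul_nonneg hbpos.le (Nat.cast_nonneg N₀)]

/-- Corollary to Atkinson's theorem: if `T` is a measure-preserving automorphism of a
Borel probability space `(X, μ)`, `φ` is integrable, and the set `P` of points whose
Birkhoff sums `S(n,x)` tend to `+∞` has positive measure, then the a.e.-defined
Birkhoff average `φ̂` satisfies `∫_P φ̂ dμ > 0`; in particular `φ̂ > 0` on a set of
positive measure. -/
theorem birkhoff_average_positive_of_sums_tendsto_atTop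
    {X : Type*} [MeasurableSpace X] (μ : Measure X) [IsProbabilityMeasure μ]
    (T : X ≃ᵐ X) (hT : MeasurePreserving (⇑T) μ μ)
    (φ : X → ℝ) (hφ : Integrable φ μ)
    (P : Set X)
    (hP : P = {x : X | Tendsto (fun n => ∑ i ∈ Finset.range n, φ ((⇑T)^[i] x)) atTop atTop})
    (hPpos : 0 < μ P)
    (φhat : X → ℝ)
    (hφhat : ∀ᵐ x ∂μ, Tendsto
      (fun n => (∑ i ∈ Finset.range n, φ ((⇑T)^[i] x)) / (n : ℝ)) atTop (nhds (φhat x))) :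
    (0 < ∫ x in P, φhat x ∂μ) ∧ 0 < μ {x : X | 0 < φhat x} := by
  classical
  have hφae : AEMeasurable φ μ := hφ.aemeasurable
  set φ₀ := hφae.mk φ with hφ₀def
  have hφ₀m : Measurable φ₀ := hφae.measurable_mk
  have hφφ₀ : φ =ᵐ[μ] φ₀ := hφae.ae_eq_mk
  have horb : ∀ᵐ x ∂μ, ∀ i : ℕ, φ ((⇑T)^[i] x) = φ₀ ((⇑T)^[i] x) := by
    rw [ae_all_iff]
    intro i
    have h0 : μ {x | ¬ φ x = φ₀ x} = 0 := ae_iff.mp hφφ₀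
    have h1 := (hT.iterate i).quasiMeasurePreserving.preimage_null h0
    rw [ae_iff]
    exact h1
  have hSS : ∀ᵐ x ∂μ, ∀ n : ℕ, (∑ i ∈ Finset.range n, φ ((⇑T)^[i] x))
      = ∑ i ∈ Finset.range n, φ₀ ((⇑T)^[i] x) := by
    filter_upwards [horb] with x hx n
    exact Finset.sum_congr rfl fun i _ => hx i
  have hE0 := atkinson_core μ T hT φ₀ hφ₀m
  have hEnull : ∀ᵐ x ∂μ,
      ¬ (Tendsto (fun n => ∑ i ∈ Finset.range n, φ₀ ((⇑T)^[i] x)) atTop atTop ∧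
        Tendsto (fun n => (∑ i ∈ Finset.range n, φ₀ ((⇑T)^[i] x)) / (n : ℝ)) atTop (nhds 0)) :=
    measure_eq_zero_iff_ae_notMem.mp hE0
  have h1 : ∀ᵐ x ∂μ, x ∈ P → 0 ≤ φhat x := by
    filter_upwards [hφhat] with x hx hxP
    rw [hP] at hxP
    have hev : ∀ᶠ n in atTop,
        (0 : ℝ) ≤ (∑ i ∈ Finset.range n, φ ((⇑T)^[i] x)) / (n : ℝ) := by
      filter_upwards [hxP.eventually_ge_atTop 0] with n hn
      exact div_nonneg hn (Nat.cast_nonneg n)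
    exact ge_of_tendsto hx hev
  have h2 : ∀ᵐ x ∂μ, x ∈ P → 0 < φhat x := by
    filter_upwards [hφhat, hSS, h1, hEnull] with x hx hxS hx1 hxE hxP
    by_contra hc
    have heq : φhat x = 0 := le_antisymm (not_lt.mp hc) (hx1 hxP)
    apply hxE
    constructor
    · have hxP' := hxP
      rw [hP] at hxP'
      exact hxP'.congr fun n => hxS n
    · rw [heq] at hx
      exact hx.congr fun n => by rw [hxS n]
  have h3 : μ (P \ {x | 0 < φhat x}) = 0 := by
    rw [measure_eq_zero_iff_ae_notMem]
    filter_upwards [h2] with x hx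
    intro hmem
    exact hmem.2 (hx hmem.1)
  have h4 : μ P ≤ μ (P ∩ {x | 0 < φhat x}) := by
    calc μ P ≤ μ ((P ∩ {x | 0 < φhat x}) ∪ (P \ {x | 0 < φhat x})) :=
        measure_mono (fun y hy => (em (y ∈ {x | 0 < φhat x})).elim
          (fun h => Or.inl ⟨hy, h⟩) (fun h => Or.inr ⟨hy, h⟩))
      _ ≤ μ (P ∩ {x | 0 < φhat x}) + μ (P \ {x | 0 < φhat x}) := measure_union_le _ _
      _ = μ (P ∩ {x | 0 < φhat x}) := by rw [h3, add_zero]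
  have hPint : 0 < μ (P ∩ {x | 0 < φhat x}) := lt_of_lt_of_le hPpos h4
  refine ⟨?_, lt_of_lt_of_le hPint (measure_mono Set.inter_subset_right)⟩
  -- integrability of φhat
  have hψm : ∀ n : ℕ,
      Measurable (fun x => (∑ i ∈ Finset.range n, φ₀ ((⇑T)^[i] x)) / (n : ℝ)) := fun n =>
    (Finset.measurable_sum _ fun i _ => hφ₀m.comp (T.measurable.iterate i)).div_const _
  have hφhat' : ∀ᵐ x ∂μ, Tendsto
      (fun n => (∑ i ∈ Finset.range n, φ₀ ((⇑T)^[i] x)) / (n : ℝ)) atTop (nhds (φhat x)) := by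
    filter_upwards [hφhat, hSS] with x hx hxS
    exact hx.congr fun n => by rw [hxS n]
  have hmeas : AEStronglyMeasurable φhat μ :=
    aestronglyMeasurable_of_tendsto_ae atTop (fun n => (hψm n).aestronglyMeasurable) hφhat'
  have hI : HasFiniteIntegral φ₀ μ := (hφ.congr hφφ₀).2
  have hIn : ∀ i : ℕ, ∫⁻ x, ‖φ₀ ((⇑T)^[i] x)‖₊ ∂μ = ∫⁻ x, ‖φ₀ x‖₊ ∂μ := fun i =>
    (hT.iterate i).lintegral_comp hφ₀m.nnnorm.coe_nnreal_ennreal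
  have hbound : ∀ n : ℕ, 1 ≤ n →
      (∫⁻ x, ‖(∑ i ∈ Finset.range n, φ₀ ((⇑T)^[i] x)) / (n : ℝ)‖₊ ∂μ)
        ≤ ∫⁻ x, ‖φ₀ x‖₊ ∂μ := by
    intro n hn
    have hn0 : (n : ℝ≥0) ≠ 0 := Nat.cast_ne_zero.mpr (by omega)
    have hpt : ∀ x : X, (‖(∑ i ∈ Finset.range n, φ₀ ((⇑T)^[i] x)) / (n : ℝ)‖₊ : ℝ≥0∞)
        = (‖∑ i ∈ Finset.range n, φ₀ ((⇑T)^[i] x)‖₊ : ℝ≥0∞) * ((n : ℝ≥0∞))⁻¹ := by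
      intro x
      rw [nnnorm_div, Real.nnnorm_natCast, ENNReal.coe_div hn0, ENNReal.coe_natCast,
        div_eq_mul_inv]
    calc (∫⁻ x, ‖(∑ i ∈ Finset.range n, φ₀ ((⇑T)^[i] x)) / (n : ℝ)‖₊ ∂μ)
        = ∫⁻ x, (‖∑ i ∈ Finset.range n, φ₀ ((⇑T)^[i] x)‖₊ : ℝ≥0∞) * ((n : ℝ≥0∞))⁻¹ ∂μ :=
          lintegral_congr hpt
      _ = (∫⁻ x, (‖∑ i ∈ Finset.range n, φ₀ ((⇑T)^[i] x)‖₊ : ℝ≥0∞) ∂μ) * ((n : ℝ≥0∞))⁻¹ :=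
          lintegral_mul_const _ (Finset.measurable_sum _ fun i _ =>
            hφ₀m.comp (T.measurable.iterate i)).nnnorm.coe_nnreal_ennreal
      _ ≤ ((n : ℝ≥0∞) * ∫⁻ x, ‖φ₀ x‖₊ ∂μ) * ((n : ℝ≥0∞))⁻¹ := by
          refine mul_le_mul_left ?_ _
          calc (∫⁻ x, (‖∑ i ∈ Finset.range n, φ₀ ((⇑T)^[i] x)‖₊ : ℝ≥0∞) ∂μ)
              ≤ ∫⁻ x, ∑ i ∈ Finset.range n, (‖φ₀ ((⇑T)^[i] x)‖₊ : ℝ≥0∞) ∂μ := by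
                refine lintegral_mono fun x => ?_
                calc (‖∑ i ∈ Finset.range n, φ₀ ((⇑T)^[i] x)‖₊ : ℝ≥0∞)
                    ≤ ((∑ i ∈ Finset.range n, ‖φ₀ ((⇑T)^[i] x)‖₊ : ℝ≥0) : ℝ≥0∞) :=
                      ENNReal.coe_le_coe.mpr (nnnorm_sum_le _ _)
                  _ = ∑ i ∈ Finset.range n, (‖φ₀ ((⇑T)^[i] x)‖₊ : ℝ≥0∞) := by
                      push_cast; rfl
            _ = ∑ i ∈ Finset.range n, ∫⁻ x, (‖φ₀ ((⇑T)^[i] x)‖₊ : ℝ≥0∞) ∂μ :=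
                lintegral_finset_sum _ fun i _ =>
                  (hφ₀m.comp (T.measurable.iterate i)).nnnorm.coe_nnreal_ennreal
            _ = ∑ _i ∈ Finset.range n, ∫⁻ x, (‖φ₀ x‖₊ : ℝ≥0∞) ∂μ :=
                Finset.sum_congr rfl fun i _ => hIn i
            _ = (n : ℝ≥0∞) * ∫⁻ x, ‖φ₀ x‖₊ ∂μ := by
                rw [Finset.sum_const, Finset.card_range, nsmul_eq_mul]
      _ = (∫⁻ x, ‖φ₀ x‖₊ ∂μ) * ((n : ℝ≥0∞) * ((n : ℝ≥0∞))⁻¹) := by ring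
      _ ≤ (∫⁻ x, ‖φ₀ x‖₊ ∂μ) * 1 := mul_le_mul_right (ENNReal.mul_inv_le_one _) _
      _ = ∫⁻ x, ‖φ₀ x‖₊ ∂μ := mul_one _
  have hfatou : ∫⁻ x, ‖φhat x‖₊ ∂μ ≤ ∫⁻ x, ‖φ₀ x‖₊ ∂μ := by
    have hpt : ∀ᵐ x ∂μ, (‖φhat x‖₊ : ℝ≥0∞) = liminf
        (fun n => (‖(∑ i ∈ Finset.range n, φ₀ ((⇑T)^[i] x)) / (n : ℝ)‖₊ : ℝ≥0∞)) atTop := by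
      filter_upwards [hφhat'] with x hx
      exact (ENNReal.tendsto_coe.mpr hx.nnnorm).liminf_eq.symm
    calc ∫⁻ x, ‖φhat x‖₊ ∂μ
        = ∫⁻ x, liminf
            (fun n => (‖(∑ i ∈ Finset.range n, φ₀ ((⇑T)^[i] x)) / (n : ℝ)‖₊ : ℝ≥0∞)) atTop ∂μ :=
          lintegral_congr_ae hpt
      _ ≤ liminf (fun n => ∫⁻ x,
            (‖(∑ i ∈ Finset.range n, φ₀ ((⇑T)^[i] x)) / (n : ℝ)‖₊ : ℝ≥0∞) ∂μ) atTop :=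
          lintegral_liminf_le fun n => (hψm n).nnnorm.coe_nnreal_ennreal
      _ ≤ liminf (fun _ : ℕ => ∫⁻ x, (‖φ₀ x‖₊ : ℝ≥0∞) ∂μ) atTop :=
          liminf_le_liminf (eventually_atTop.mpr ⟨1, hbound⟩)
      _ = ∫⁻ x, ‖φ₀ x‖₊ ∂μ := liminf_const _
  have hint : Integrable φhat μ := ⟨hmeas, lt_of_le_of_lt hfatou hI⟩
  -- P is null measurable
  have hPE : P =ᵐ[μ]
      {x | Tendsto (fun n => ∑ i ∈ Finset.range n, φ₀ ((⇑T)^[i] x)) atTop atTop} := by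
    rw [Filter.eventuallyEq_set]
    filter_upwards [hSS] with x hx
    rw [hP]
    constructor
    · intro h; exact h.congr fun n => hx n
    · intro h; exact h.congr fun n => (hx n).symm
  have hPnull : NullMeasurableSet P μ := by
    have hEm : MeasurableSet
        {x | Tendsto (fun n => ∑ i ∈ Finset.range n, φ₀ ((⇑T)^[i] x)) atTop atTop} :=
      measurableSet_tendsto atTop
        (fun n => Finset.measurable_sum _ fun i _ => hφ₀m.comp (T.measurable.iterate i))
    exact hEm.nullMeasurableSet.congr hPE.symm
  have hnn : 0 ≤ᵐ[μ.restrict P] φhat := by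
    filter_upwards [ae_restrict_of_ae h2, ae_restrict_mem₀ hPnull] with x hx hxP
    exact (hx hxP).le
  rw [setIntegral_pos_iff_support_of_nonneg_ae hnn hint.integrableOn]
  refine lt_of_lt_of_le hPint (measure_mono ?_)
  intro x hx
  exact ⟨ne_of_gt hx.2, hx.1⟩
end

section
/- Let $T\colon X \to X$ be a measure-preserving automorphism of a probability space $(X,\mu)$, let $U \subset X$ have positive measure with almost every point of $U$ recurrent, and let $\phi\colon X \to \mathbb{R}$ be integrable and vanish outside $V = \bigcup_{n\ge 0}T^n(U)$. If the induced first-return sum $\phi_U(x) = \sum_{m=0}^{n(x)-1}\phi(T^m(x))$ satisfies $\phi_U(x) \ge 1$ for almost all $x \in U$, then the Birkhoff average $\hat\phi(x) = \lim_{n\to\infty}\frac1n\sum_{i=0}^{n-1}\phi(T^i(x))$ is strictly positive on a set of positive $\mu$-measure. -/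
open MeasureTheory Filter Finset
open scoped ENNReal NNReal

/-- If `T` is a measure-preserving automorphism of a probability space, `U` has
positive measure with almost every point of `U` recurrent, `φ` is integrable and
vanishes outside `V = ⋃_{n ≥ 0} Tⁿ(U)`, and the first-return sum of `φ` on `U` is at
least `1` almost everywhere on `U`, then the Birkhoff average `φ̂` of `φ` is strictly
positive on a set of positive measure. -/
theorem birkhoff_average_positive_of_return_sums
    {X : Type*} [MeasurableSpace X] (μ : Measure X) [IsProbabilityMeasure μ]
    (T : X ≃ᵐ X) (hT : MeasurePreserving (⇑T) μ μ)
    (U : Set X) (hUm : MeasurableSet U) (hUpos : 0 < μ U)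
    (hrec : ∀ᵐ x ∂(μ.restrict U), ∃ n : ℕ, 0 < n ∧ (⇑T)^[n] x ∈ U)
    (φ : X → ℝ) (hφ : Integrable φ μ)
    (hvanish : ∀ x, x ∉ (⋃ n : ℕ, (⇑T)^[n] '' U) → φ x = 0)
    (hreturn : ∀ᵐ x ∂(μ.restrict U),
      (1 : ℝ) ≤ ∑ m ∈ Finset.range (sInf {n : ℕ | 0 < n ∧ (⇑T)^[n] x ∈ U}),
        φ ((⇑T)^[m] x))
    (φhat : X → ℝ)
    (hφhat : ∀ᵐ x ∂μ, Tendsto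
      (fun n : ℕ => (∑ i ∈ Finset.range n, φ ((⇑T)^[i] x)) / (n : ℝ))
      atTop (nhds (φhat x))) :
    0 < μ {x : X | 0 < φhat x} := by
  classical
  set f : X → X := ⇑T with hfdef
  set g : X → X := ⇑T.symm with hgdef
  have hfm : Measurable f := T.measurable
  have hgm : Measurable g := T.symm.measurable
  have hInvL : ∀ (n : ℕ) (x : X), g^[n] (f^[n] x) = x := fun n x =>
    (Function.LeftInverse.iterate T.symm_apply_apply n) x
  have hInvR : ∀ (n : ℕ) (y : X), f^[n] (g^[n] y) = y := fun n y =>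
    (Function.LeftInverse.iterate T.apply_symm_apply n) y
  have hMP : ∀ m : ℕ, MeasurePreserving (f^[m]) μ μ := fun m => hT.iterate m
  have hGP : ∀ m : ℕ, MeasurePreserving (g^[m]) μ μ := fun m =>
    (MeasurePreserving.symm T hT).iterate m
  have hEmb : ∀ m : ℕ, MeasurableEmbedding (f^[m]) := by
    intro m
    induction m with
    | zero => simpa using MeasurableEmbedding.id
    | succ k ih =>
        rw [Function.iterate_succ']
        exact T.measurableEmbedding.comp ih
  have hcancel : ∀ (m j : ℕ), j ≤ m → ∀ x, g^[j] (f^[m] x) = f^[m - j] x := by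
    intro m j hj x
    conv_lhs => rw [show m = j + (m - j) by omega, Function.iterate_add_apply]
    exact hInvL j _
  -- the sets D m : points whose most recent backward visit to U was m steps ago
  set D : ℕ → Set X := fun m =>
    (g^[m] ⁻¹' U) ∩ ⋂ (j : ℕ) (_ : j < m), (g^[j] ⁻¹' U)ᶜ with hDdef
  have hDmem : ∀ m y, y ∈ D m ↔ (g^[m] y ∈ U ∧ ∀ j < m, g^[j] y ∉ U) := by
    intro m y
    simp [hDdef, Set.mem_iInter]
  have hDmeas : ∀ m, MeasurableSet (D m) := by
    intro m
    exact ((hgm.iterate m) hUm).inter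
      (MeasurableSet.iInter fun j => MeasurableSet.iInter fun _ =>
        ((hgm.iterate j) hUm).compl)
  have hDdisj : Pairwise (Function.onFun Disjoint D) := by
    intro m l hml
    rcases Nat.lt_or_ge m l with h | h
    · refine Set.disjoint_left.2 fun y hym hyl => ?_
      exact (((hDmem l y).1 hyl).2 m h) (((hDmem m y).1 hym).1)
    · have h' : l < m := by omega
      refine Set.disjoint_left.2 fun y hym hyl => ?_
      exact (((hDmem m y).1 hym).2 l h') (((hDmem l y).1 hyl).1)
  set V : Set X := ⋃ n : ℕ, f^[n] '' U with hVdef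
  have hmemV : ∀ y, y ∈ V ↔ ∃ n : ℕ, g^[n] y ∈ U := by
    intro y
    simp only [hVdef, Set.mem_iUnion, Set.mem_image]
    constructor
    · rintro ⟨n, u, hu, rfl⟩
      exact ⟨n, by rwa [hInvL n u]⟩
    · rintro ⟨n, hn⟩
      exact ⟨n, g^[n] y, hn, hInvR n y⟩
  have hUnionD : (⋃ m, D m) = V := by
    ext y
    simp only [Set.mem_iUnion]
    constructor
    · rintro ⟨m, hm⟩
      exact (hmemV y).2 ⟨m, ((hDmem m y).1 hm).1⟩
    · intro hy
      obtain ⟨n, hn⟩ := (hmemV y).1 hy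
      have hne : {k : ℕ | g^[k] y ∈ U}.Nonempty := ⟨n, hn⟩
      refine ⟨sInf {k : ℕ | g^[k] y ∈ U}, (hDmem _ y).2 ⟨Nat.sInf_mem hne, fun j hj hjU => ?_⟩⟩
      exact Nat.notMem_of_lt_sInf hj hjU
  have hVmeas : MeasurableSet V := by
    have hVeq : V = ⋃ n : ℕ, g^[n] ⁻¹' U := by
      ext y
      simp only [Set.mem_iUnion, Set.mem_preimage]
      exact hmemV y
    rw [hVeq]
    exact MeasurableSet.iUnion fun n => (hgm.iterate n) hUm
  set A : ℕ → Set X := fun m => f^[m] ⁻¹' D m with hAdef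
  have hAmeas : ∀ m, MeasurableSet (A m) := fun m => (hfm.iterate m) (hDmeas m)
  have hAmem : ∀ m x, x ∈ A m ↔ (x ∈ U ∧ ∀ i, 0 < i → i ≤ m → f^[i] x ∉ U) := by
    intro m x
    rw [hAdef]
    simp only [Set.mem_preimage]
    rw [hDmem, hInvL m x]
    constructor
    · rintro ⟨hxU, hmin⟩
      refine ⟨hxU, fun i hi0 him => ?_⟩
      have h := hmin (m - i) (by omega)
      rwa [hcancel m (m - i) (by omega) x, show m - (m - i) = i by omega] at h
    · rintro ⟨hxU, hno⟩
      refine ⟨hxU, fun j hj => ?_⟩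
      rw [hcancel m j (le_of_lt hj) x]
      exact hno (m - j) (by omega) (by omega)
  -- the summands of the Kac decomposition
  have hφAESM : ∀ m : ℕ, AEStronglyMeasurable (fun x => φ (f^[m] x)) μ := fun m =>
    hφ.1.comp_quasiMeasurePreserving (hMP m).quasiMeasurePreserving
  set ψ : ℕ → X → ℝ := fun m => (A m).indicator (fun x => φ (f^[m] x)) with hψdef
  have hψAESM : ∀ m, AEStronglyMeasurable (ψ m) μ := fun m =>
    (hφAESM m).indicator (hAmeas m)
  have hψeq : ∀ m, ψ m = fun x => (D m).indicator φ (f^[m] x) := by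
    intro m
    funext x
    by_cases hx : x ∈ A m
    · have hx' : f^[m] x ∈ D m := hx
      simp only [hψdef]
      rw [Set.indicator_of_mem hx, Set.indicator_of_mem hx']
    · have hx' : f^[m] x ∉ D m := hx
      simp only [hψdef]
      rw [Set.indicator_of_notMem hx, Set.indicator_of_notMem hx']
  have hψint : ∀ m, ∫ x, ψ m x ∂μ = ∫ x in D m, φ x ∂μ := by
    intro m
    rw [hψeq m, (hMP m).integral_comp (hEmb m) ((D m).indicator φ)]
    exact integral_indicator (hDmeas m)
  have hψlint : ∀ m, ∫⁻ x, ‖ψ m x‖₊ ∂μ = ∫⁻ x in D m, ‖φ x‖₊ ∂μ := by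
    intro m
    rw [hψeq m]
    have h1 : (fun x => ((‖(D m).indicator φ (f^[m] x)‖₊ : ℝ≥0∞))) =
        fun x => ((D m).indicator (fun y => ((‖φ y‖₊ : ℝ≥0∞))) (f^[m] x)) := by
      funext x
      by_cases hx : f^[m] x ∈ D m
      · rw [Set.indicator_of_mem hx, Set.indicator_of_mem hx]
      · rw [Set.indicator_of_notMem hx, Set.indicator_of_notMem hx]
        simp
    rw [h1, (hMP m).lintegral_comp_emb (hEmb m)]
    exact lintegral_indicator (hDmeas m) _
  have hsumlint : ∑' m, ∫⁻ x, ‖ψ m x‖₊ ∂μ ≠ ⊤ := by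
    have h1 : ∑' m, ∫⁻ x, ‖ψ m x‖₊ ∂μ = ∫⁻ x in ⋃ m, D m, ‖φ x‖₊ ∂μ := by
      simp_rw [hψlint]
      exact (lintegral_iUnion hDmeas hDdisj _).symm
    rw [h1]
    refine ne_top_of_le_ne_top hφ.2.ne ?_
    exact setLIntegral_le_lintegral _ _
  have hitsum : ∫ x, (∑' m, ψ m x) ∂μ = ∑' m, ∫ x, ψ m x ∂μ :=
    integral_tsum hψAESM hsumlint
  -- Φ : the induced return sum on U
  set Φ : X → ℝ := U.indicator
    (fun x => ∑ m ∈ Finset.range (sInf {n : ℕ | 0 < n ∧ f^[n] x ∈ U}), φ (f^[m] x)) with hΦdef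
  have hrec' : ∀ᵐ x ∂μ, x ∈ U → ∃ n : ℕ, 0 < n ∧ f^[n] x ∈ U :=
    (ae_restrict_iff' hUm).1 hrec
  -- key pointwise structure
  have hkey : ∀ x, (x ∈ U → ∃ n : ℕ, 0 < n ∧ f^[n] x ∈ U) →
      ∃ N : ℕ, (∀ m, N ≤ m → ψ m x = 0) ∧ Φ x = ∑ m ∈ Finset.range N, ψ m x := by
    intro x hx
    by_cases hxU : x ∈ U
    · obtain ⟨n, hn⟩ := hx hxU
      set S : Set ℕ := {n : ℕ | 0 < n ∧ f^[n] x ∈ U} with hSdef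
      have hSne : S.Nonempty := ⟨n, hn⟩
      set N : ℕ := sInf S with hNdef
      have hNmem : N ∈ S := Nat.sInf_mem hSne
      refine ⟨N, ?_, ?_⟩
      · intro m hm
        simp only [hψdef]
        rw [Set.indicator_of_notMem]
        intro hA
        exact ((hAmem m x).1 hA).2 N hNmem.1 hm (hNmem.2)
      · have hmem : ∀ m, m < N → x ∈ A m := by
          intro m hm
          refine (hAmem m x).2 ⟨hxU, fun i hi0 him => fun hiU => ?_⟩
          have : N ≤ i := Nat.sInf_le ⟨hi0, hiU⟩
          omega
        simp only [hΦdef]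
        rw [Set.indicator_of_mem hxU]
        refine Finset.sum_congr rfl fun m hm => ?_
        simp only [hψdef]
        rw [Set.indicator_of_mem (hmem m (Finset.mem_range.1 hm))]
    · refine ⟨0, fun m _ => ?_, ?_⟩
      · simp only [hψdef]
        rw [Set.indicator_of_notMem]
        intro hA
        exact hxU ((hAmem m x).1 hA).1
      · simp only [hΦdef]
        rw [Set.indicator_of_notMem hxU, Finset.range_zero, Finset.sum_empty]
  have haeKey : ∀ᵐ x ∂μ, ∃ N : ℕ, (∀ m, N ≤ m → ψ m x = 0) ∧
      Φ x = ∑ m ∈ Finset.range N, ψ m x :=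
    hrec'.mono fun x hx => hkey x hx
  -- identification of the tsum with Φ, a.e.
  have haeTsum : ∀ᵐ x ∂μ, (∑' m, ψ m x) = Φ x := by
    refine haeKey.mono fun x hx => ?_
    obtain ⟨N, hzero, hΦx⟩ := hx
    rw [hΦx]
    exact tsum_eq_sum fun m hm =>
      hzero m (Nat.le_of_not_lt fun h => hm (Finset.mem_range.2 h))
  -- partial sums of ψ tend to Φ a.e. (they are eventually constant)
  have haePartial : ∀ᵐ x ∂μ, Tendsto (fun N : ℕ => ∑ m ∈ Finset.range N, ψ m x)
      atTop (nhds (Φ x)) := by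
    refine haeKey.mono fun x hx => ?_
    obtain ⟨N, hzero, hΦx⟩ := hx
    refine Tendsto.congr' ?_ (tendsto_const_nhds (x := Φ x))
    filter_upwards [eventually_ge_atTop N] with n hn
    rw [hΦx]
    exact Finset.sum_subset (Finset.range_subset_range.2 hn)
      (fun m _ hm => hzero m (Nat.le_of_not_lt fun h => hm (Finset.mem_range.2 h)))
  have hΦAESM : AEStronglyMeasurable Φ μ := by
    refine aestronglyMeasurable_of_tendsto_ae atTop (fun N => ?_) haePartial
    exact Finset.aestronglyMeasurable_fun_sum (Finset.range N) fun m _ => hψAESM m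
  have hΦle : ∀ᵐ x ∂μ, (‖Φ x‖₊ : ℝ≥0∞) ≤ ∑' m, (‖ψ m x‖₊ : ℝ≥0∞) := by
    refine haeKey.mono fun x hx => ?_
    obtain ⟨N, hzero, hΦx⟩ := hx
    rw [hΦx]
    calc (‖∑ m ∈ Finset.range N, ψ m x‖₊ : ℝ≥0∞)
        ≤ ∑ m ∈ Finset.range N, (‖ψ m x‖₊ : ℝ≥0∞) := by
          rw [← ENNReal.coe_finset_sum]
          exact_mod_cast nnnorm_sum_le _ _
      _ ≤ ∑' m, (‖ψ m x‖₊ : ℝ≥0∞) := ENNReal.sum_le_tsum _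
  have hΦint : Integrable Φ μ := by
    refine ⟨hΦAESM, ?_⟩
    rw [hasFiniteIntegral_def]
    calc ∫⁻ x, ‖Φ x‖₊ ∂μ ≤ ∫⁻ x, ∑' m, (‖ψ m x‖₊ : ℝ≥0∞) ∂μ := lintegral_mono_ae hΦle
      _ = ∑' m, ∫⁻ x, ‖ψ m x‖₊ ∂μ := lintegral_tsum fun m => (hψAESM m).enorm
      _ < ⊤ := lt_top_iff_ne_top.2 hsumlint
  -- the Kac identity : ∫ Φ = ∫ φ
  have hKac : ∫ x, Φ x ∂μ = ∫ x, φ x ∂μ := by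
    have h1 : ∫ x, Φ x ∂μ = ∫ x, (∑' m, ψ m x) ∂μ :=
      integral_congr_ae (haeTsum.mono fun x hx => hx.symm)
    rw [h1, hitsum]
    have h2 : ∑' m, ∫ x, ψ m x ∂μ = ∫ x in V, φ x ∂μ := by
      simp_rw [hψint]
      rw [← hUnionD]
      exact (integral_iUnion hDmeas hDdisj (hφ.integrableOn)).symm
    rw [h2]
    have h3 : V.indicator φ = φ := by
      funext x
      by_cases hx : x ∈ V
      · rw [Set.indicator_of_mem hx]
      · rw [Set.indicator_of_notMem hx]
        exact (hvanish x hx).symm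
    conv_rhs => rw [← h3]
    exact (integral_indicator hVmeas).symm
  -- lower bound : ∫ Φ ≥ μ U
  have hreturn' : ∀ᵐ x ∂μ, x ∈ U →
      (1 : ℝ) ≤ ∑ m ∈ Finset.range (sInf {n : ℕ | 0 < n ∧ f^[n] x ∈ U}), φ (f^[m] x) :=
    (ae_restrict_iff' hUm).1 hreturn
  have hlow : (μ U).toReal ≤ ∫ x, φ x ∂μ := by
    rw [← hKac]
    have hmono : ∀ᵐ x ∂μ, U.indicator (fun _ => (1 : ℝ)) x ≤ Φ x := by
      refine hreturn'.mono fun x hx => ?_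
      by_cases hxU : x ∈ U
      · rw [Set.indicator_of_mem hxU]; simp only [hΦdef]
        rw [Set.indicator_of_mem hxU]
        exact hx hxU
      · rw [Set.indicator_of_notMem hxU]; simp only [hΦdef]
        rw [Set.indicator_of_notMem hxU]
    calc (μ U).toReal = ∫ x, U.indicator (fun _ => (1 : ℝ)) x ∂μ := by
          rw [integral_indicator_const (1 : ℝ) hUm]
          simp
          rfl
      _ ≤ ∫ x, Φ x ∂μ :=
          integral_mono_ae ((integrable_const (1 : ℝ)).indicator hUm) hΦint hmono
  -- Step B : Vitali convergence gives ∫ φhat = ∫ φ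
  set Sav : ℕ → X → ℝ := fun n x => (∑ i ∈ Finset.range n, φ (f^[i] x)) / (n : ℝ)
    with hSavdef
  have hSavAESM : ∀ n, AEStronglyMeasurable (Sav n) μ := by
    intro n
    have hs : AEStronglyMeasurable (fun x => ∑ i ∈ Finset.range n, φ (f^[i] x)) μ :=
      Finset.aestronglyMeasurable_fun_sum _ fun i _ => hφAESM i
    have heq : Sav n = fun x => (∑ i ∈ Finset.range n, φ (f^[i] x)) * ((n : ℝ))⁻¹ := by
      funext x
      simp [hSavdef, div_eq_mul_inv]
    rw [heq]
    exact hs.mul_const _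
  have hφL1 : MemLp φ 1 μ := memLp_one_iff_integrable.2 hφ
  have hSnorm : ∀ n : ℕ, eLpNorm (Sav n) 1 μ ≤ eLpNorm φ 1 μ := by
    intro n
    rcases Nat.eq_zero_or_pos n with rfl | hn
    · have : Sav 0 = fun _ => (0 : ℝ) := by
        funext x
        simp [hSavdef]
      rw [this]
      simp
    · have h1 : Sav n = ((n : ℝ)⁻¹) • fun x => ∑ i ∈ Finset.range n, φ (f^[i] x) := by
        funext x
        simp [hSavdef, div_eq_inv_mul]
      rw [h1, eLpNorm_const_smul]
      have h2 : eLpNorm (fun x => ∑ i ∈ Finset.range n, φ (f^[i] x)) 1 μ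
          ≤ (n : ℝ≥0∞) * eLpNorm φ 1 μ := by
        have hsumfun : (fun x => ∑ i ∈ Finset.range n, φ (f^[i] x)) =
            ∑ i ∈ Finset.range n, fun x => φ (f^[i] x) := by
          funext x
          simp
        rw [hsumfun]
        calc eLpNorm (∑ i ∈ Finset.range n, fun x => φ (f^[i] x)) 1 μ
            ≤ ∑ i ∈ Finset.range n, eLpNorm (fun x => φ (f^[i] x)) 1 μ :=
              eLpNorm_sum_le (fun i _ => hφAESM i) le_rfl
          _ = ∑ i ∈ Finset.range n, eLpNorm φ 1 μ :=
              Finset.sum_congr rfl fun i _ =>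
                eLpNorm_comp_measurePreserving hφ.1 (hMP i)
          _ = (n : ℝ≥0∞) * eLpNorm φ 1 μ := by
              rw [Finset.sum_const, Finset.card_range, nsmul_eq_mul]
      have hnn : (‖(n : ℝ)⁻¹‖₊ : ℝ≥0∞) = ((n : ℝ≥0∞))⁻¹ := by
        rw [nnnorm_inv]
        rw [ENNReal.coe_inv (by exact_mod_cast hn.ne')]
        congr 1
        simp [Real.nnnorm_natCast]
      calc (‖(n : ℝ)⁻¹‖₊ : ℝ≥0∞) * eLpNorm (fun x => ∑ i ∈ Finset.range n, φ (f^[i] x)) 1 μ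
          ≤ (‖(n : ℝ)⁻¹‖₊ : ℝ≥0∞) * ((n : ℝ≥0∞) * eLpNorm φ 1 μ) :=
            mul_le_mul_right h2 _
        _ = eLpNorm φ 1 μ := by
            rw [hnn, ← mul_assoc, ENNReal.inv_mul_cancel (by exact_mod_cast hn.ne')
              (ENNReal.natCast_ne_top n), one_mul]
  have hφhatAESM : AEStronglyMeasurable φhat μ :=
    aestronglyMeasurable_of_tendsto_ae atTop hSavAESM hφhat
  have hφhatmem : MemLp φhat 1 μ := by
    refine ⟨hφhatAESM, ?_⟩
    calc eLpNorm φhat 1 μ ≤ atTop.liminf fun n => eLpNorm (Sav n) 1 μ :=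
        MeasureTheory.Lp.eLpNorm_lim_le_liminf_eLpNorm hSavAESM φhat hφhat
      _ ≤ atTop.liminf fun _ => eLpNorm φ 1 μ :=
          liminf_le_liminf (Eventually.of_forall hSnorm)
      _ = eLpNorm φ 1 μ := liminf_const _
      _ < ⊤ := hφL1.2
  have hUI : UnifIntegrable Sav 1 μ := by
    intro ε hε
    obtain ⟨δ, hδpos, hδ⟩ := hφL1.eLpNorm_indicator_le le_rfl ENNReal.one_ne_top hε
    refine ⟨δ, hδpos, fun n s hs hμs => ?_⟩
    rcases Nat.eq_zero_or_pos n with rfl | hn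
    · have h00 : s.indicator (Sav 0) = 0 := by
        funext x
        by_cases hx : x ∈ s <;> simp [hSavdef, hx]
      rw [h00, eLpNorm_zero]
      exact zero_le
    · have h1 : s.indicator (Sav n) =
          ((n : ℝ)⁻¹) • ∑ i ∈ Finset.range n, s.indicator fun x => φ (f^[i] x) := by
        funext x
        by_cases hx : x ∈ s
        · simp [hSavdef, Set.indicator_of_mem hx, div_eq_inv_mul, Finset.mul_sum]
        · simp [Set.indicator_of_notMem hx]
      rw [h1, eLpNorm_const_smul]
      have h2 : ∀ i : ℕ, eLpNorm (s.indicator fun x => φ (f^[i] x)) 1 μ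
          ≤ ENNReal.ofReal ε := by
        intro i
        have hteq : s.indicator (fun x => φ (f^[i] x)) =
            ((g^[i] ⁻¹' s).indicator φ) ∘ f^[i] := by
          funext x
          simp only [Function.comp_apply]
          have hx : f^[i] x ∈ g^[i] ⁻¹' s ↔ x ∈ s := by
            rw [Set.mem_preimage, hInvL]
          by_cases h : x ∈ s
          · rw [Set.indicator_of_mem h, Set.indicator_of_mem (hx.2 h)]
          · rw [Set.indicator_of_notMem h,
              Set.indicator_of_notMem fun c => h (hx.1 c)]
        rw [hteq, eLpNorm_comp_measurePreserving
          (hφ.1.indicator ((hgm.iterate i) hs)) (hMP i)]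
        refine hδ _ ((hgm.iterate i) hs) ?_
        rw [(hGP i).measure_preimage hs.nullMeasurableSet]
        exact hμs
      have h3 : eLpNorm (∑ i ∈ Finset.range n, s.indicator fun x => φ (f^[i] x)) 1 μ
          ≤ (n : ℝ≥0∞) * ENNReal.ofReal ε := by
        calc eLpNorm (∑ i ∈ Finset.range n, s.indicator fun x => φ (f^[i] x)) 1 μ
            ≤ ∑ i ∈ Finset.range n,
                eLpNorm (s.indicator fun x => φ (f^[i] x)) 1 μ :=
              eLpNorm_sum_le (fun i _ => (hφAESM i).indicator hs) le_rfl
          _ ≤ ∑ _i ∈ Finset.range n, ENNReal.ofReal ε :=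
              Finset.sum_le_sum fun i _ => h2 i
          _ = (n : ℝ≥0∞) * ENNReal.ofReal ε := by
              rw [Finset.sum_const, Finset.card_range, nsmul_eq_mul]
      have hnn : (‖(n : ℝ)⁻¹‖₊ : ℝ≥0∞) = ((n : ℝ≥0∞))⁻¹ := by
        rw [nnnorm_inv]
        rw [ENNReal.coe_inv (by exact_mod_cast hn.ne')]
        congr 1
        simp [Real.nnnorm_natCast]
      calc (‖(n : ℝ)⁻¹‖₊ : ℝ≥0∞) *
            eLpNorm (∑ i ∈ Finset.range n, s.indicator fun x => φ (f^[i] x)) 1 μ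
          ≤ (‖(n : ℝ)⁻¹‖₊ : ℝ≥0∞) * ((n : ℝ≥0∞) * ENNReal.ofReal ε) :=
            mul_le_mul_right h3 _
        _ = ENNReal.ofReal ε := by
            rw [hnn, ← mul_assoc, ENNReal.inv_mul_cancel (by exact_mod_cast hn.ne')
              (ENNReal.natCast_ne_top n), one_mul]
  have hL1conv : Tendsto (fun n => eLpNorm (Sav n - φhat) 1 μ) atTop (nhds 0) :=
    tendsto_Lp_finite_of_tendsto_ae le_rfl ENNReal.one_ne_top hSavAESM hφhatmem hUI hφhat
  have hSavInt : ∀ n, Integrable (Sav n) μ := by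
    intro n
    have : Integrable (fun x => ∑ i ∈ Finset.range n, φ (f^[i] x)) μ :=
      integrable_finset_sum _ fun i _ =>
        memLp_one_iff_integrable.1 (hφL1.comp_measurePreserving (hMP i))
    exact this.div_const _
  have hIntTendsto : Tendsto (fun n => ∫ x, Sav n x ∂μ) atTop (nhds (∫ x, φhat x ∂μ)) := by
    refine tendsto_integral_of_L1 φhat (memLp_one_iff_integrable.1 hφhatmem).1
      (Eventually.of_forall hSavInt) ?_
    have : ∀ n : ℕ, (∫⁻ x, ‖Sav n x - φhat x‖ₑ ∂μ) = eLpNorm (Sav n - φhat) 1 μ := by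
      intro n
      rw [eLpNorm_one_eq_lintegral_enorm]
      rfl
    simpa [this] using hL1conv
  have hConst : ∀ n : ℕ, 1 ≤ n → ∫ x, Sav n x ∂μ = ∫ x, φ x ∂μ := by
    intro n hn
    have h1 : ∫ x, Sav n x ∂μ =
        (∫ x, ∑ i ∈ Finset.range n, φ (f^[i] x) ∂μ) / (n : ℝ) :=
      integral_div _ _
    have hint : ∀ i : ℕ, Integrable (fun x => φ (f^[i] x)) μ := fun i =>
      memLp_one_iff_integrable.1 (hφL1.comp_measurePreserving (hMP i))
    rw [h1, integral_finset_sum _ (fun i _ => hint i)]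
    have h2 : ∀ i ∈ Finset.range n, ∫ x, φ (f^[i] x) ∂μ = ∫ x, φ x ∂μ := fun i _ =>
      (hMP i).integral_comp (hEmb i) φ
    rw [Finset.sum_congr rfl h2, Finset.sum_const, Finset.card_range, nsmul_eq_mul]
    have hn0 : (n : ℝ) ≠ 0 := by exact_mod_cast Nat.one_le_iff_ne_zero.1 hn
    field_simp
  have hlim : ∫ x, φhat x ∂μ = ∫ x, φ x ∂μ := by
    refine tendsto_nhds_unique hIntTendsto ?_
    refine Tendsto.congr' ?_ (tendsto_const_nhds (x := ∫ x, φ x ∂μ))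
    filter_upwards [eventually_ge_atTop 1] with n hn
    exact (hConst n hn).symm
  -- conclusion
  by_contra hcon
  push_neg at hcon
  have h0 : μ {x : X | 0 < φhat x} = 0 := le_antisymm hcon zero_le
  have hle : ∀ᵐ x ∂μ, φhat x ≤ 0 := by
    rw [ae_iff]
    convert h0 using 2
    ext x
    simp [not_le]
  have hint_le : ∫ x, φhat x ∂μ ≤ 0 := integral_nonpos_of_ae hle
  have hpos : 0 < (μ U).toReal :=
    ENNReal.toReal_pos hUpos.ne' (measure_ne_top μ U)
  linarith [hlow, hlim ▸ hint_le]
end
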